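/- arXiv:2412.05867 — 4 statements merged into one kernel-verified Lean document; each statement's English description precedes it below -/
import Mathlib

section
/- Let K be an imaginary quadratic field with ring of integers O, let p be a rational prime, and set O_p = O ⊗_ℤ ℤ_p. Let o ≥ 0 be an integer and let ε : O_p^× → ℂ^× be a group homomorphism such that ε(η)² = 1 for every η ∈ ℤ_p^×, and such that the restriction of ε to the subgroup 1 + p³O_p has order exactly p^o (that is, p^o is the smallest positive integer k with ε^k trivial on 1 + p³O_p). Then {x ∈ 1 + p³O_p : ε(x) = 1} = (1 + p³ℤ_p)·(1 + p^{3+o}O_p). -/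
open Filter

section PadicFacts

variable {p : ℕ} [Fact p.Prime]

private lemma padic_dvd_iff_norm (n : ℕ) (x : ℤ_[p]) :
    (p : ℤ_[p]) ^ n ∣ x ↔ ‖x‖ ≤ (p : ℝ) ^ (-n : ℤ) := by
  rw [PadicInt.norm_le_pow_iff_mem_span_pow, Ideal.mem_span_singleton]

private lemma p_real_inv_lt_one : ((p : ℝ))⁻¹ < 1 := by
  have h1 : (1 : ℝ) < (p : ℝ) := by
    exact_mod_cast (Fact.out : p.Prime).one_lt
  rw [inv_lt_one_iff₀]; right; exact h1

private lemma p_real_pos : (0 : ℝ) < (p : ℝ) := by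
  exact_mod_cast (Fact.out : p.Prime).pos

private lemma pow_neg_eq_inv_pow (n : ℕ) : ((p : ℝ)) ^ (-n : ℤ) = ((p : ℝ)⁻¹) ^ n := by
  rw [zpow_neg, inv_pow, zpow_natCast]

lemma padic_sep (x : ℤ_[p]) (h : ∀ n : ℕ, (p : ℤ_[p]) ^ n ∣ x) : x = 0 := by
  have hb : ∀ n : ℕ, ‖x‖ ≤ ((p : ℝ)⁻¹) ^ n := by
    intro n
    rw [← pow_neg_eq_inv_pow]
    exact (padic_dvd_iff_norm n x).mp (h n)
  have ht : Tendsto (fun n : ℕ => ((p : ℝ)⁻¹) ^ n) atTop (nhds 0) :=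
    tendsto_pow_atTop_nhds_zero_of_lt_one (by positivity) p_real_inv_lt_one
  have : ‖x‖ ≤ 0 := ge_of_tendsto ht (Eventually.of_forall hb)
  simpa using le_antisymm this (norm_nonneg x)

lemma padic_complete (x : ℕ → ℤ_[p]) (h : ∀ n, (p : ℤ_[p]) ^ n ∣ x (n + 1) - x n) :
    ∃ L, ∀ n, (p : ℤ_[p]) ^ n ∣ L - x n := by
  have tel : ∀ n m, n ≤ m → (p : ℤ_[p]) ^ n ∣ x m - x n := by
    intro n m hnm
    induction m, hnm using Nat.le_induction with
    | base => simp
    | succ m hm ih =>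
      have h1 : (p : ℤ_[p]) ^ n ∣ x (m + 1) - x m :=
        dvd_trans (pow_dvd_pow _ hm) (h m)
      have := dvd_add h1 ih
      simpa using this
  have hC : CauchySeq x := by
    apply cauchySeq_of_le_geometric ((p : ℝ)⁻¹) 1 p_real_inv_lt_one
    intro n
    have := (padic_dvd_iff_norm n _).mp (h n)
    rw [pow_neg_eq_inv_pow] at this
    rw [dist_eq_norm, ← norm_neg]
    simpa [norm_sub_rev] using this.trans_eq (one_mul _).symm
  obtain ⟨L, hL⟩ := cauchySeq_tendsto_of_complete hC
  refine ⟨L, fun n => ?_⟩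
  rw [padic_dvd_iff_norm]
  have h1 : Tendsto (fun m => ‖x m - x n‖) atTop (nhds ‖L - x n‖) :=
    ((hL.sub tendsto_const_nhds).norm)
  refine le_of_tendsto h1 ?_
  rw [eventually_atTop]
  exact ⟨n, fun m hm => (padic_dvd_iff_norm n _).mp (tel n m hm)⟩

end PadicFacts

section Identities

variable {R : Type*} [CommRing R]

/-- Binomial expansion to second order. -/
lemma binom_second_order (x y : R) (n : ℕ) :
    ∃ c : R, (x + y) ^ n = x ^ n + n * x ^ (n - 1) * y + y ^ 2 * c := by
  induction n with
  | zero => exact ⟨0, by simp⟩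
  | succ k ih =>
    rcases ih with ⟨c, hc⟩
    cases k with
    | zero => exact ⟨0, by ring⟩
    | succ m =>
      refine ⟨(m + 1) * x ^ m * 1 + c * x + c * y, ?_⟩
      have h2 : (x + y) ^ (m + 2) = (x + y) ^ (m + 1) * (x + y) := by ring
      rw [h2, hc]
      simp only [Nat.add_sub_cancel]
      push_cast
      ring

lemma one_add_pow (t : R) (n : ℕ) :
    ∃ c : R, (1 + t) ^ n = 1 + n * t + t ^ 2 * c := by
  obtain ⟨c, hc⟩ := binom_second_order (1 : R) t n
  exact ⟨c, by simpa using hc⟩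

end Identities

section Newton

variable {R : Type*} [CommRing R] (π : R)
variable (hsep : ∀ x : R, (∀ n : ℕ, π ^ n ∣ x) → x = 0)
variable (hcompl : ∀ x : ℕ → R, (∀ n, π ^ n ∣ x (n + 1) - x n) → ∃ L, ∀ n, π ^ n ∣ L - x n)

include hsep hcompl in
/-- geometric series: `1 + π a` is a unit. -/
lemma isUnit_one_add_pi_mul (a : R) : IsUnit (1 + π * a) := by
  set y : R := -(π * a) with hy
  set x : ℕ → R := fun n => ∑ j ∈ Finset.range n, y ^ j with hx
  have hdiff : ∀ n, π ^ n ∣ x (n + 1) - x n := by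
    intro n
    have : x (n + 1) - x n = y ^ n := by
      rw [hx]; simp [Finset.sum_range_succ]
    rw [this, hy]
    exact ⟨(-a) ^ n, by rw [show -(π * a) = π * -a from by ring, mul_pow]⟩
  obtain ⟨L, hL⟩ := hcompl x hdiff
  have key : (1 + π * a) * L = 1 := by
    have hz : ∀ n : ℕ, π ^ n ∣ (1 + π * a) * L - 1 := by
      intro n
      have h1 : (1 + π * a) * x n = 1 - y ^ n := by
        have := geom_sum_mul y n
        rw [hx]
        have h2 : (1 + π * a) = -(y - 1) := by rw [hy]; ring
        rw [h2]
        calc -(y - 1) * ∑ j ∈ Finset.range n, y ^ j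
            = -((∑ j ∈ Finset.range n, y ^ j) * (y - 1)) := by ring
          _ = -(y ^ n - 1) := by rw [this]
          _ = 1 - y ^ n := by ring
      have h3 : (1 + π * a) * L - 1 = (1 + π * a) * (L - x n) + ((1 + π * a) * x n - 1) := by
        ring
      rw [h3, h1]
      refine dvd_add (Dvd.dvd.mul_left (hL n) _) ?_
      have : 1 - y ^ n - 1 = -(y ^ n) := by ring
      rw [this]
      refine dvd_neg.mpr ?_
      rw [hy]
      exact ⟨(-a) ^ n, by rw [show -(π * a) = π * -a from by ring, mul_pow]⟩
    exact sub_eq_zero.mp (hsep _ hz)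
  exact IsUnit.of_mul_eq_one L key

end Newton
section NewtonRoot

variable {R : Type*} [CommRing R] (π : R)
variable (hsep : ∀ x : R, (∀ n : ℕ, π ^ n ∣ x) → x = 0)
variable (hcompl : ∀ x : ℕ → R, (∀ n, π ^ n ∣ x (n + 1) - x n) → ∃ L, ∀ n, π ^ n ∣ L - x n)

include hsep hcompl in
/-- Newton iteration: `q`-th roots of elements `1 + π^(m+v) a`, where `q = π^v u`. -/
lemma newton_root (q v : ℕ) (u : R) (hu : IsUnit u) (hq : (q : R) = π ^ v * u)
    (m : ℕ) (hm : v + 1 ≤ m) (a : R) :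
    ∃ b : R, (1 + π ^ m * b) ^ q = 1 + π ^ (m + v) * a := by
  obtain ⟨u', hu'⟩ := hu.exists_right_inv
  set T : R := 1 + π ^ (m + v) * a with hT
  set pred : ℕ → R → Prop :=
    fun n y => (∃ b, y = 1 + π ^ m * b) ∧ (∃ e, y ^ q = T + π ^ (m + v + n) * e) with hpred
  have base : pred 0 1 := by
    refine ⟨⟨0, by ring⟩, ⟨-a, ?_⟩⟩
    rw [hT]; ring
  have step : ∀ n (y : R), pred n y → ∃ y', pred (n + 1) y' ∧ π ^ n ∣ y' - y := by
    rintro n y ⟨⟨b, hb⟩, ⟨e, he⟩⟩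
    obtain ⟨c₁, hc₁⟩ := one_add_pow (π ^ m * b) (q - 1)
    set b₂ : R := (q - 1 : ℕ) * b + π ^ m * b ^ 2 * c₁ with hb₂
    have hq1 : y ^ (q - 1) = 1 + π ^ m * b₂ := by
      rw [hb, hc₁, hb₂]; ring
    have hm1 : 1 ≤ m := le_trans (Nat.le_add_left 1 v) hm
    have hpowm : π ^ m = π * π ^ (m - 1) := by
      conv_lhs => rw [show m = 1 + (m - 1) by omega]
      rw [pow_add, pow_one]
    have hunit : IsUnit (1 + π ^ m * b₂) := by
      have := isUnit_one_add_pi_mul π hsep hcompl (π ^ (m - 1) * b₂)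
      rwa [show π * (π ^ (m - 1) * b₂) = π ^ m * b₂ by rw [hpowm]; ring] at this
    obtain ⟨z, hz⟩ := hunit.exists_right_inv
    set δ : R := -(π ^ (m + n) * (e * (u' * z))) with hδ
    obtain ⟨c, hc⟩ := binom_second_order y δ q
    have hqd : (q : R) * y ^ (q - 1) * δ = -(π ^ (m + v + n) * e) := by
      rw [hq, hq1, hδ]
      calc π ^ v * u * (1 + π ^ m * b₂) * -(π ^ (m + n) * (e * (u' * z)))
          = -(π ^ (m + v + n) * e) * (u * u') * ((1 + π ^ m * b₂) * z) := by ring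
        _ = -(π ^ (m + v + n) * e) := by rw [hu', hz]; ring
    have hkey : π ^ (m + n) * π ^ (m + n) = π ^ (m + v + (n + 1)) * π ^ (m + n - v - 1) := by
      rw [← pow_add, ← pow_add]; congr 1; omega
    refine ⟨y + δ, ⟨⟨b - π ^ n * (e * (u' * z)), ?_⟩, ⟨π ^ (m + n - v - 1) * (e * (u' * z)) ^ 2 * c, ?_⟩⟩, ?_⟩
    · rw [hb, hδ]; ring
    · rw [hc, hqd, he]
      have expand : δ ^ 2 = π ^ (m + n) * π ^ (m + n) * (e * (u' * z)) ^ 2 := by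
        rw [hδ]; ring
      rw [expand, hkey]; ring
    · exact ⟨π ^ m * -(e * (u' * z)), by rw [hδ]; ring⟩
  let F : ∀ n : ℕ, {y : R // pred n y} := fun n =>
    Nat.rec ⟨1, base⟩
      (fun k prev =>
        ⟨Classical.choose (step k prev.1 prev.2),
         (Classical.choose_spec (step k prev.1 prev.2)).1⟩) n
  have hFd : ∀ n, π ^ n ∣ (F (n + 1)).1 - (F n).1 := by
    intro n
    exact (Classical.choose_spec (step n (F n).1 (F n).2)).2
  obtain ⟨L, hL⟩ := hcompl (fun n => (F n).1) hFd
  have hLform : ∃ b : R, L = 1 + π ^ m * b := by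
    obtain ⟨b₀, hb₀⟩ := (F m).2.1
    obtain ⟨cm, hcm⟩ := hL m
    exact ⟨b₀ + cm, by linear_combination hcm + hb₀⟩
  obtain ⟨b, hbL⟩ := hLform
  refine ⟨b, ?_⟩
  rw [← hbL]
  have hz : ∀ n : ℕ, π ^ n ∣ L ^ q - T := by
    intro n
    have h1 : π ^ n ∣ L ^ q - ((F n).1) ^ q :=
      dvd_trans (hL n) (sub_dvd_pow_sub_pow L (F n).1 q)
    obtain ⟨e, he⟩ := (F n).2.2
    have h2 : π ^ n ∣ ((F n).1) ^ q - T := by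
      rw [he]
      exact ⟨π ^ (m + v) * e, by rw [show m + v + n = n + (m + v) by omega]; ring⟩
    simpa using dvd_add h1 h2
  exact sub_eq_zero.mp (hsep _ hz)

end NewtonRoot

open NumberField
open scoped TensorProduct

/-- The subgroup `1 + cA = {x ∈ Aˣ | x = 1 + c·a for some a ∈ A}` of the unit group of a
commutative ring `A`. -/
def onePlusSubgroup {A : Type*} [CommRing A] (c : A) : Subgroup Aˣ where
  carrier := {x : Aˣ | ∃ a : A, (x : A) = 1 + c * a}
  one_mem' := ⟨0, by simp⟩
  mul_mem' := by
    rintro x y ⟨a, ha⟩ ⟨b, hb⟩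
    exact ⟨a + b + c * (a * b), by rw [Units.val_mul, ha, hb]; ring⟩
  inv_mem' := by
    rintro x ⟨a, ha⟩
    refine ⟨-(a * ((x⁻¹ : Aˣ) : A)), ?_⟩
    linear_combination Units.inv_mul x - ((x⁻¹ : Aˣ) : A) * ha

section OKBasis

open NumberField

variable (K : IntermediateField ℚ ℂ) [NumberField ↥K]

set_option maxHeartbeats 1000000 in
/-- A ℤ-basis-like coordinate system of `𝓞 K` of the form `(1, w₀)`. -/
lemma exists_w (hdeg : Module.finrank ℚ ↥K = 2) :
    ∃ (w₀ : 𝓞 ↥K) (c₀ c₁ : 𝓞 ↥K →ₗ[ℤ] ℤ),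
      c₀ 1 = 1 ∧ c₀ w₀ = 0 ∧ c₁ 1 = 0 ∧ c₁ w₀ = 1 ∧
      ∀ x : 𝓞 ↥K, x = c₀ x • (1 : 𝓞 ↥K) + c₁ x • w₀ := by
  have hrank : Module.finrank ℤ (𝓞 ↥K) = 2 := by
    rw [NumberField.RingOfIntegers.rank]; exact hdeg
  let e : Module.Basis (Fin 2) ℤ (𝓞 ↥K) :=
    (Module.finBasis ℤ (𝓞 ↥K)).reindex (finCongr hrank)
  set a : ℤ := e.repr 1 0 with ha
  set b : ℤ := e.repr 1 1 with hb
  have hone : (1 : 𝓞 ↥K) = a • e 0 + b • e 1 := by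
    have h := e.sum_repr 1
    rw [Fin.sum_univ_two] at h
    exact h.symm
  have hcop : IsCoprime a b := by
    rw [Int.isCoprime_iff_gcd_eq_one]
    by_contra hne
    obtain ⟨a', ha'⟩ : ((Int.gcd a b : ℤ)) ∣ a := Int.gcd_dvd_left a b
    obtain ⟨b', hb'⟩ : ((Int.gcd a b : ℤ)) ∣ b := Int.gcd_dvd_right a b
    set y : 𝓞 ↥K := a' • e 0 + b' • e 1 with hy
    have hdy : ((Int.gcd a b : ℤ) : 𝓞 ↥K) * y = 1 := by
      rw [hy, hone, ← zsmul_eq_mul]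
      match_scalars
      · linear_combination -ha'
      · linear_combination -hb'
    have hK : ((Int.gcd a b : ℤ) : ↥K) * algebraMap (𝓞 ↥K) ↥K y = 1 := by
      have h := congrArg (algebraMap (𝓞 ↥K) ↥K) hdy
      rw [map_mul, map_one, map_intCast] at h
      exact h
    have hd0 : ((Int.gcd a b : ℤ)) ≠ 0 := by
      intro h0
      rw [h0] at hK
      simp at hK
    have hdK : ((Int.gcd a b : ℤ) : ↥K) ≠ 0 := Int.cast_ne_zero.mpr hd0
    have hyK : algebraMap (𝓞 ↥K) ↥K y = algebraMap ℚ ↥K (((Int.gcd a b : ℤ) : ℚ))⁻¹ := by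
      apply mul_left_cancel₀ hdK
      rw [hK]
      have : ((Int.gcd a b : ℤ) : ↥K) = algebraMap ℚ ↥K ((Int.gcd a b : ℤ) : ℚ) := by
        rw [map_intCast]
      rw [this, ← map_mul]
      rw [mul_inv_cancel₀ (by exact_mod_cast hd0), map_one]
    have hyInt : IsIntegral ℤ (algebraMap (𝓞 ↥K) ↥K y) :=
      NumberField.RingOfIntegers.isIntegral_coe y
    rw [hyK] at hyInt
    have hInt : IsIntegral ℤ ((((Int.gcd a b : ℤ)) : ℚ))⁻¹ :=
      IsIntegral.tower_bot (algebraMap ℚ ↥K).injective hyInt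
    obtain ⟨z, hz⟩ := IsIntegrallyClosed.isIntegral_iff.mp hInt
    have hq : ((Int.gcd a b : ℤ) : ℚ) * (z : ℚ) = 1 := by
      rw [show (algebraMap ℤ ℚ) z = ((z : ℚ)) from rfl] at hz
      rw [hz, mul_inv_cancel₀ (by exact_mod_cast hd0)]
    have hdz : (Int.gcd a b : ℤ) * z = 1 := by exact_mod_cast hq
    have hu : IsUnit ((Int.gcd a b : ℤ)) := IsUnit.of_mul_eq_one _ hdz
    rcases Int.isUnit_iff.mp hu with h1 | h1
    · exact hne (by exact_mod_cast h1)
    · omega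
  obtain ⟨u, v, huv⟩ := hcop
  refine ⟨-v • e 0 + u • e 1,
    u • e.coord 0 + v • e.coord 1,
    (-b) • e.coord 0 + a • e.coord 1, ?_, ?_, ?_, ?_, ?_⟩
  · simp only [LinearMap.add_apply, LinearMap.smul_apply, Module.Basis.coord_apply, ← ha, ← hb,
      smul_eq_mul]
    linarith [huv]
  · simp only [LinearMap.add_apply, LinearMap.smul_apply, Module.Basis.coord_apply, map_add,
      map_smul, Module.Basis.repr_self, smul_eq_mul]
    simp [Finsupp.single_apply]
    ring
  · simp only [LinearMap.add_apply, LinearMap.smul_apply, Module.Basis.coord_apply, ← ha, ← hb,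
      smul_eq_mul]
    ring
  · simp only [LinearMap.add_apply, LinearMap.smul_apply, Module.Basis.coord_apply, map_add,
      map_smul, Module.Basis.repr_self, smul_eq_mul]
    simp [Finsupp.single_apply]
    linarith [huv]
  · intro x
    have hx := e.sum_repr x
    rw [Fin.sum_univ_two] at hx
    simp only [LinearMap.add_apply, LinearMap.smul_apply, Module.Basis.coord_apply, smul_eq_mul]
    conv_lhs => rw [← hx]
    rw [hone]
    match_scalars
    · linear_combination (-(e.repr x 0)) * huv
    · linear_combination (-(e.repr x 1)) * huv

end OKBasis

section Coords

open NumberField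
open scoped TensorProduct

variable (p : ℕ) [Fact p.Prime] (K : IntermediateField ℚ ℂ) [NumberField ↥K]

set_option maxHeartbeats 1000000 in
/-- Coordinates on `𝓞 K ⊗ ℤ_p` relative to the "basis" `(1, w)`. -/
lemma exists_coords (hdeg : Module.finrank ℚ ↥K = 2) :
    ∃ (w : (𝓞 ↥K) ⊗[ℤ] ℤ_[p]) (Φ₀ Φ₁ : (𝓞 ↥K) ⊗[ℤ] ℤ_[p] →ₗ[ℤ] ℤ_[p]),
      (∀ s t : ℤ_[p], Φ₀ ((Algebra.TensorProduct.includeRight :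
          ℤ_[p] →ₐ[ℤ] (𝓞 ↥K) ⊗[ℤ] ℤ_[p]) s +
          (Algebra.TensorProduct.includeRight :
          ℤ_[p] →ₐ[ℤ] (𝓞 ↥K) ⊗[ℤ] ℤ_[p]) t * w) = s) ∧
      (∀ s t : ℤ_[p], Φ₁ ((Algebra.TensorProduct.includeRight :
          ℤ_[p] →ₐ[ℤ] (𝓞 ↥K) ⊗[ℤ] ℤ_[p]) s +
          (Algebra.TensorProduct.includeRight :
          ℤ_[p] →ₐ[ℤ] (𝓞 ↥K) ⊗[ℤ] ℤ_[p]) t * w) = t) ∧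
      (∀ x : (𝓞 ↥K) ⊗[ℤ] ℤ_[p], x = (Algebra.TensorProduct.includeRight :
          ℤ_[p] →ₐ[ℤ] (𝓞 ↥K) ⊗[ℤ] ℤ_[p]) (Φ₀ x) +
          (Algebra.TensorProduct.includeRight :
          ℤ_[p] →ₐ[ℤ] (𝓞 ↥K) ⊗[ℤ] ℤ_[p]) (Φ₁ x) * w) := by
  obtain ⟨w₀, c₀, c₁, h00, h0w, h10, h1w, hrec⟩ := exists_w K hdeg
  set ρ : ℤ_[p] →ₐ[ℤ] (𝓞 ↥K) ⊗[ℤ] ℤ_[p] := Algebra.TensorProduct.includeRight with hρ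
  set Φ0 : (𝓞 ↥K) ⊗[ℤ] ℤ_[p] →ₗ[ℤ] ℤ_[p] :=
    TensorProduct.lift ((LinearMap.lsmul ℤ ℤ_[p]).comp c₀) with hΦ0
  set Φ1 : (𝓞 ↥K) ⊗[ℤ] ℤ_[p] →ₗ[ℤ] ℤ_[p] :=
    TensorProduct.lift ((LinearMap.lsmul ℤ ℤ_[p]).comp c₁) with hΦ1
  refine ⟨w₀ ⊗ₜ 1, Φ0, Φ1, ?_, ?_, ?_⟩
  · intro s t
    have h2 : ρ t * (w₀ ⊗ₜ (1 : ℤ_[p])) = w₀ ⊗ₜ t := by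
      rw [hρ, Algebra.TensorProduct.includeRight_apply, Algebra.TensorProduct.tmul_mul_tmul,
        one_mul, mul_one]
    rw [hρ, Algebra.TensorProduct.includeRight_apply, ← hρ, h2, map_add, hΦ0]
    erw [TensorProduct.lift.tmul, TensorProduct.lift.tmul]
    simp only [LinearMap.comp_apply, LinearMap.lsmul_apply]
    rw [h00, h0w, one_smul, zero_smul, add_zero]
  · intro s t
    have h2 : ρ t * (w₀ ⊗ₜ (1 : ℤ_[p])) = w₀ ⊗ₜ t := by
      rw [hρ, Algebra.TensorProduct.includeRight_apply, Algebra.TensorProduct.tmul_mul_tmul,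
        one_mul, mul_one]
    rw [hρ, Algebra.TensorProduct.includeRight_apply, ← hρ, h2, map_add, hΦ1]
    erw [TensorProduct.lift.tmul, TensorProduct.lift.tmul]
    simp only [LinearMap.comp_apply, LinearMap.lsmul_apply]
    rw [h10, h1w, one_smul, zero_smul, zero_add]
  · intro x
    induction x using TensorProduct.induction_on with
    | zero =>
      rw [LinearMap.map_zero Φ0, LinearMap.map_zero Φ1, map_zero ρ, zero_mul, add_zero]
    | tmul m c =>
      rw [hΦ0, hΦ1]
      erw [TensorProduct.lift.tmul, TensorProduct.lift.tmul]
      simp only [LinearMap.comp_apply, LinearMap.lsmul_apply]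
      have h2 : ρ (c₁ m • c) * (w₀ ⊗ₜ (1 : ℤ_[p])) = w₀ ⊗ₜ (c₁ m • c) := by
        rw [hρ, Algebra.TensorProduct.includeRight_apply,
          Algebra.TensorProduct.tmul_mul_tmul, one_mul, mul_one]
      rw [hρ, Algebra.TensorProduct.includeRight_apply, ← hρ, h2]
      conv_lhs => rw [hrec m]
      rw [TensorProduct.add_tmul, TensorProduct.smul_tmul, TensorProduct.smul_tmul]
    | add x y hx hy =>
      rw [LinearMap.map_add Φ0, LinearMap.map_add Φ1, map_add ρ, map_add ρ, add_mul]
      conv_lhs => rw [hx, hy]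
      abel

end Coords

section Transfer

variable {p : ℕ} [Fact p.Prime] {A : Type*} [CommRing A]
variable (ρ : ℤ_[p] →+* A) (w : A) (Φ₀ Φ₁ : A →+ ℤ_[p])
variable (key0 : ∀ s t : ℤ_[p], Φ₀ (ρ s + ρ t * w) = s)
variable (key1 : ∀ s t : ℤ_[p], Φ₁ (ρ s + ρ t * w) = t)
variable (recon : ∀ x : A, x = ρ (Φ₀ x) + ρ (Φ₁ x) * w)

include key0 key1 recon in
lemma Phi_pn_mul (n : ℕ) (x : A) :
    Φ₀ ((p : A) ^ n * x) = (p : ℤ_[p]) ^ n * Φ₀ x ∧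
    Φ₁ ((p : A) ^ n * x) = (p : ℤ_[p]) ^ n * Φ₁ x := by
  have hx := recon x
  have hρp : (p : A) ^ n = ρ ((p : ℤ_[p]) ^ n) := by
    rw [map_pow, map_natCast]
  have hform : (p : A) ^ n * x =
      ρ ((p : ℤ_[p]) ^ n * Φ₀ x) + ρ ((p : ℤ_[p]) ^ n * Φ₁ x) * w := by
    conv_lhs => rw [hx]
    rw [hρp, map_mul, map_mul]
    ring
  rw [hform, key0, key1]
  exact ⟨rfl, rfl⟩

include key0 key1 recon in
lemma A_sep (x : A) (h : ∀ n : ℕ, (p : A) ^ n ∣ x) : x = 0 := by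
  have h0 : Φ₀ x = 0 := by
    apply padic_sep
    intro n
    obtain ⟨c, hc⟩ := h n
    rw [hc, (Phi_pn_mul ρ w Φ₀ Φ₁ key0 key1 recon n c).1]
    exact Dvd.intro _ rfl
  have h1 : Φ₁ x = 0 := by
    apply padic_sep
    intro n
    obtain ⟨c, hc⟩ := h n
    rw [hc, (Phi_pn_mul ρ w Φ₀ Φ₁ key0 key1 recon n c).2]
    exact Dvd.intro _ rfl
  rw [recon x, h0, h1]
  simp

include key0 key1 recon in
lemma A_compl (x : ℕ → A) (h : ∀ n, (p : A) ^ n ∣ x (n + 1) - x n) :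
    ∃ L, ∀ n, (p : A) ^ n ∣ L - x n := by
  have h0 : ∀ n, (p : ℤ_[p]) ^ n ∣ Φ₀ (x (n + 1)) - Φ₀ (x n) := by
    intro n
    obtain ⟨c, hc⟩ := h n
    have := (Phi_pn_mul ρ w Φ₀ Φ₁ key0 key1 recon n c).1
    rw [← hc, map_sub] at this
    exact ⟨Φ₀ c, this⟩
  have h1 : ∀ n, (p : ℤ_[p]) ^ n ∣ Φ₁ (x (n + 1)) - Φ₁ (x n) := by
    intro n
    obtain ⟨c, hc⟩ := h n
    have := (Phi_pn_mul ρ w Φ₀ Φ₁ key0 key1 recon n c).2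
    rw [← hc, map_sub] at this
    exact ⟨Φ₁ c, this⟩
  obtain ⟨L₀, hL₀⟩ := padic_complete (fun n => Φ₀ (x n)) h0
  obtain ⟨L₁, hL₁⟩ := padic_complete (fun n => Φ₁ (x n)) h1
  refine ⟨ρ L₀ + ρ L₁ * w, fun n => ?_⟩
  obtain ⟨d₀, hd₀⟩ := hL₀ n
  obtain ⟨d₁, hd₁⟩ := hL₁ n
  refine ⟨ρ d₀ + ρ d₁ * w, ?_⟩
  have hρp : (p : A) ^ n = ρ ((p : ℤ_[p]) ^ n) := by rw [map_pow, map_natCast]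
  conv_lhs => rw [recon (x n)]
  have e₀ : ρ L₀ - ρ (Φ₀ (x n)) = ρ ((p : ℤ_[p]) ^ n * d₀) := by
    rw [← map_sub]
    exact congrArg ρ (by linear_combination hd₀)
  have e₁ : ρ L₁ - ρ (Φ₁ (x n)) = ρ ((p : ℤ_[p]) ^ n * d₁) := by
    rw [← map_sub]
    exact congrArg ρ (by linear_combination hd₁)
  have expand : ρ L₀ + ρ L₁ * w - (ρ (Φ₀ (x n)) + ρ (Φ₁ (x n)) * w)
      = (ρ L₀ - ρ (Φ₀ (x n))) + (ρ L₁ - ρ (Φ₁ (x n))) * w := by ring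
  rw [expand, e₀, e₁, map_mul, map_mul, hρp]
  ring

end Transfer

section PadicSqrt

variable {p : ℕ} [Fact p.Prime]

lemma padic_sqrt (c : ℤ_[p]) :
    ∃ y : ℤ_[p], IsUnit y ∧ y ^ 2 = 1 + (p : ℤ_[p]) ^ 3 * c := by
  have hsep := fun x => padic_sep (p := p) x
  have hcompl := fun x => padic_complete (p := p) x
  by_cases hp2 : p = 2
  · subst hp2
    obtain ⟨b, hb⟩ := newton_root ((2 : ℕ) : ℤ_[2]) hsep hcompl 2 1 1 isUnit_one
      (by rw [pow_one, mul_one]) 2 (by norm_num) c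
    refine ⟨1 + ((2 : ℕ) : ℤ_[2]) ^ 2 * b, ?_, ?_⟩
    · have := isUnit_one_add_pi_mul ((2 : ℕ) : ℤ_[2]) hsep hcompl (((2 : ℕ) : ℤ_[2]) * b)
      rwa [show ((2 : ℕ) : ℤ_[2]) * (((2 : ℕ) : ℤ_[2]) * b) = ((2 : ℕ) : ℤ_[2]) ^ 2 * b
        by ring] at this
    · rw [hb]
  · have h2u : IsUnit (2 : ℤ_[p]) := by
      rw [PadicInt.isUnit_iff]
      refine le_antisymm (PadicInt.norm_le_one _) ?_
      by_contra hlt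
      push_neg at hlt
      have : ‖((2 : ℤ) : ℤ_[p])‖ < 1 := by
        have h22 : ((2 : ℤ) : ℤ_[p]) = (2 : ℤ_[p]) := by norm_cast
        rw [h22]; exact hlt
      rw [PadicInt.norm_int_lt_one_iff_dvd] at this
      have hpd : p ∣ 2 := by exact_mod_cast this
      exact hp2 ((Nat.prime_dvd_prime_iff_eq Fact.out Nat.prime_two).mp hpd)
    obtain ⟨b, hb⟩ := newton_root ((p : ℕ) : ℤ_[p]) hsep hcompl 2 0 (2 : ℤ_[p]) h2u
      (by rw [pow_zero, one_mul]; norm_cast) 3 (by norm_num) c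
    refine ⟨1 + ((p : ℕ) : ℤ_[p]) ^ 3 * b, ?_, ?_⟩
    · have := isUnit_one_add_pi_mul ((p : ℕ) : ℤ_[p]) hsep hcompl (((p : ℕ) : ℤ_[p]) ^ 2 * b)
      rwa [show ((p : ℕ) : ℤ_[p]) * (((p : ℕ) : ℤ_[p]) ^ 2 * b) = ((p : ℕ) : ℤ_[p]) ^ 3 * b
        by ring] at this
    · rw [hb]

end PadicSqrt

lemma mem_onePlusSubgroup {A : Type*} [CommRing A] {c : A} {x : Aˣ} :
    x ∈ onePlusSubgroup c ↔ ∃ a : A, (x : A) = 1 + c * a := Iff.rfl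

section MainAbstract

variable {p : ℕ} [Fact p.Prime] {A : Type*} [CommRing A]

set_option maxHeartbeats 2000000 in
lemma main_abstract (ρ : ℤ_[p] →+* A) (w : A) (Φ₀ Φ₁ : A →+ ℤ_[p])
    (key0 : ∀ s t : ℤ_[p], Φ₀ (ρ s + ρ t * w) = s)
    (key1 : ∀ s t : ℤ_[p], Φ₁ (ρ s + ρ t * w) = t)
    (recon : ∀ x : A, x = ρ (Φ₀ x) + ρ (Φ₁ x) * w)
    (o : ℕ) (ε : Aˣ →* ℂˣ)
    (hquad : ∀ u : ℤ_[p]ˣ, (ε (Units.map (ρ.toMonoidHom) u)) ^ 2 = 1)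
    (hord₁ : ∀ x ∈ onePlusSubgroup ((p : A) ^ 3), ε x ^ (p ^ o) = 1)
    (hord₂ : ∀ k : ℕ, 0 < k → (∀ x ∈ onePlusSubgroup ((p : A) ^ 3), ε x ^ k = 1) → p ^ o ≤ k) :
    onePlusSubgroup ((p : A) ^ 3) ⊓ ε.ker =
      Subgroup.map (Units.map (ρ.toMonoidHom))
        (onePlusSubgroup ((p : ℤ_[p]) ^ 3)) ⊔ onePlusSubgroup ((p : A) ^ (3 + o)) := by
  have hppos : 0 < p := (Fact.out : p.Prime).pos
  have hsep := A_sep ρ w Φ₀ Φ₁ key0 key1 recon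
  have hcompl := A_compl ρ w Φ₀ Φ₁ key0 key1 recon
  have hcoe : ∀ zz : ℤ_[p], (ρ.toMonoidHom) zz = ρ zz := fun _ => rfl
  -- units 1 + p^k a for k ≥ 1
  have hunit : ∀ (k : ℕ), 1 ≤ k → ∀ a : A, IsUnit (1 + (p : A) ^ k * a) := by
    intro k hk a
    have h := isUnit_one_add_pi_mul ((p : ℕ) : A) hsep hcompl ((p : A) ^ (k - 1) * a)
    rwa [show ((p : ℕ) : A) * ((p : A) ^ (k - 1) * a) = (p : A) ^ k * a by
      have hpk : (p : A) ^ k = (p : A) ^ (k - 1) * (p : A) := by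
        rw [← pow_succ]; congr 1; omega
      rw [hpk]; ring] at h
  -- p-power roots in A
  have hrootA : ∀ (j : ℕ) (a : A), ∃ b : A,
      (1 + (p : A) ^ 3 * b) ^ (p ^ j) = 1 + (p : A) ^ (3 + j) * a := by
    intro j
    induction j with
    | zero => intro a; exact ⟨a, by norm_num⟩
    | succ j ih =>
      intro a
      obtain ⟨b', hb'⟩ := newton_root ((p : ℕ) : A) hsep hcompl p 1 1 isUnit_one
        (by rw [pow_one, mul_one]) (3 + j) (by omega) a
      obtain ⟨b, hb⟩ := ih b'
      refine ⟨b, ?_⟩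
      rw [show 3 + (j + 1) = (3 + j) + 1 by omega]
      rw [show p ^ (j + 1) = p ^ j * p from pow_succ p j, pow_mul, hb, hb']
  -- single p-th power step
  have hstep2 : ∀ (m : ℕ), 2 ≤ m → ∀ c : A, ∃ d : A,
      (1 + (p : A) ^ m * c) ^ p = 1 + (p : A) ^ (m + 1) * (c + (p : A) * d) := by
    intro m hm c
    obtain ⟨c₂, hc₂⟩ := one_add_pow ((p : A) ^ m * c) p
    refine ⟨(p : A) ^ (m - 2) * c ^ 2 * c₂, ?_⟩
    rw [hc₂]
    have hp1 : (p : A) * (p : A) ^ m = (p : A) ^ (m + 1) := (pow_succ' (p : A) m).symm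
    have hexp : (p : A) ^ m * (p : A) ^ m
        = (p : A) ^ (m + 1) * (p : A) * (p : A) ^ (m - 2) := by
      calc (p : A) ^ m * (p : A) ^ m = (p : A) ^ (m + m) := by rw [← pow_add]
        _ = (p : A) ^ (((m + 1) + 1) + (m - 2)) := by congr 1; omega
        _ = (p : A) ^ (m + 1) * (p : A) * (p : A) ^ (m - 2) := by
            rw [pow_add, pow_add, pow_one]
    linear_combination c * hp1 + c ^ 2 * c₂ * hexp
  -- the generator
  obtain ⟨gu, hgu⟩ := hunit 3 (by norm_num) w
  have hgpow : ∀ k : ℕ, ∃ e : A,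
      ((gu : A)) ^ (p ^ k) = 1 + (p : A) ^ (3 + k) * (w + (p : A) * e) := by
    intro k
    induction k with
    | zero => exact ⟨0, by rw [pow_zero, pow_one, hgu]; norm_num⟩
    | succ k ih =>
      obtain ⟨e, he⟩ := ih
      obtain ⟨d, hd⟩ := hstep2 (3 + k) (by omega) (w + (p : A) * e)
      refine ⟨e + d, ?_⟩
      rw [show p ^ (k + 1) = p ^ k * p from pow_succ p k, pow_mul, he, hd]
      rw [show 3 + (k + 1) = (3 + k) + 1 by omega]
      ring
  have hg3 : gu ∈ onePlusSubgroup ((p : A) ^ 3) := ⟨w, hgu⟩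
  -- ε trivial on the image of 1 + p³ℤ_p
  have hεZ : ∀ η ∈ onePlusSubgroup ((p : ℤ_[p]) ^ 3),
      ε (Units.map (ρ.toMonoidHom) η) = 1 := by
    intro η hη
    obtain ⟨c, hc⟩ := hη
    obtain ⟨y, hyU, hy2⟩ := padic_sqrt c
    obtain ⟨Y, hY⟩ := hyU
    have hY2 : Y ^ 2 = η := by
      apply Units.ext
      rw [Units.val_pow_eq_pow_val, hY, hy2, hc]
    rw [← hY2, map_pow, map_pow]
    exact hquad Y
  -- ε trivial on 1 + p^{3+o} A
  have hεO : ∀ ξ ∈ onePlusSubgroup ((p : A) ^ (3 + o)), ε ξ = 1 := by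
    intro ξ hξ
    obtain ⟨a, ha⟩ := hξ
    obtain ⟨b, hb⟩ := hrootA o a
    obtain ⟨Y, hY⟩ := hunit 3 (by norm_num) b
    have hYp : Y ^ (p ^ o) = ξ := by
      apply Units.ext
      rw [Units.val_pow_eq_pow_val, hY, hb, ← ha]
    rw [← hYp, map_pow]
    exact hord₁ Y ⟨b, hY⟩
  -- the decomposition
  have hdec : ∀ k : ℕ, ∀ x : Aˣ, x ∈ onePlusSubgroup ((p : A) ^ 3) →
      ∃ (n : ℕ) (z u : Aˣ),
        z ∈ Subgroup.map (Units.map (ρ.toMonoidHom))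
          (onePlusSubgroup ((p : ℤ_[p]) ^ 3)) ∧
        u ∈ onePlusSubgroup ((p : A) ^ (3 + k)) ∧ x = gu ^ n * z * u := by
    intro k
    induction k with
    | zero =>
      intro x hx
      obtain ⟨a, ha⟩ := hx
      exact ⟨0, 1, x, one_mem _, ⟨a, by rw [ha]⟩, by rw [pow_zero, one_mul, one_mul]⟩
    | succ k ih =>
      intro x hx
      obtain ⟨n, z, u, hz, hu, hxe⟩ := ih x hx
      obtain ⟨a, ha⟩ := hu
      obtain ⟨e, he⟩ := hgpow k
      obtain ⟨s', hs'⟩ : ∃ s' : ℤ_[p],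
          Φ₀ a - (((Φ₀ a).appr 1 : ℕ) : ℤ_[p]) = (p : ℤ_[p]) * s' := by
        have h := PadicInt.appr_spec 1 (Φ₀ a)
        rw [Ideal.mem_span_singleton, pow_one] at h
        exact h
      obtain ⟨t', ht'⟩ : ∃ t' : ℤ_[p],
          Φ₁ a - (((Φ₁ a).appr 1 : ℕ) : ℤ_[p]) = (p : ℤ_[p]) * t' := by
        have h := PadicInt.appr_spec 1 (Φ₁ a)
        rw [Ideal.mem_span_singleton, pow_one] at h
        exact h
      set s₀ : ℕ := (Φ₀ a).appr 1
      set t₀ : ℕ := (Φ₁ a).appr 1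
      -- ℤ_p unit 1 + p^{3+k}
      have hz₁U : IsUnit (1 + (p : ℤ_[p]) ^ (3 + k)) := by
        have h := isUnit_one_add_pi_mul ((p : ℕ) : ℤ_[p])
          (fun x hx => padic_sep x hx) (fun x hx => padic_complete x hx)
          ((p : ℤ_[p]) ^ (2 + k))
        rwa [show ((p : ℕ) : ℤ_[p]) * (p : ℤ_[p]) ^ (2 + k) = (p : ℤ_[p]) ^ (3 + k) by
          rw [show (3 + k) = (2 + k) + 1 by omega, pow_succ]; ring] at h
      obtain ⟨z₁u, hz₁⟩ := hz₁U
      have hz₁mem : z₁u ∈ onePlusSubgroup ((p : ℤ_[p]) ^ 3) :=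
        ⟨(p : ℤ_[p]) ^ k, by rw [hz₁, ← pow_add]⟩
      obtain ⟨c₂, hc₂⟩ := one_add_pow ((p : ℤ_[p]) ^ (3 + k)) s₀
      obtain ⟨c₃, hc₃⟩ := one_add_pow ((p : A) ^ (3 + k) * (w + (p : A) * e)) t₀
      set zN : Aˣ := (Units.map (ρ.toMonoidHom) z₁u) ^ s₀ with hzN
      set gP : Aˣ := gu ^ (p ^ k * t₀) with hgP
      set v : Aˣ := zN * gP with hv
      set Ss : A := (s₀ : A) + (p : A) ^ (3 + k) * ρ c₂ with hSs
      set Tt : A := (t₀ : A) * (w + (p : A) * e)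
        + (p : A) ^ (3 + k) * ((w + (p : A) * e) ^ 2 * c₃) with hTt
      have hzNval : (zN : A) = 1 + (p : A) ^ (3 + k) * Ss := by
        have h0 : (ρ (1 + (p : ℤ_[p]) ^ (3 + k))) ^ s₀ = 1 + (p : A) ^ (3 + k) * Ss := by
          rw [← map_pow ρ (1 + (p : ℤ_[p]) ^ (3 + k)) s₀, hc₂]
          simp only [map_add, map_mul, map_one, map_pow, map_natCast]
          rw [hSs]
          ring
        rw [hzN, Units.val_pow_eq_pow_val, Units.coe_map, hcoe, hz₁, h0]
      have hgPval : (gP : A) = 1 + (p : A) ^ (3 + k) * Tt := by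
        rw [hgP, Units.val_pow_eq_pow_val, pow_mul, he, hc₃, hTt]
        ring
      have hvval : (v : A) = (1 + (p : A) ^ (3 + k) * Ss) * (1 + (p : A) ^ (3 + k) * Tt) := by
        rw [hv, Units.val_mul, hzNval, hgPval]
      have ha' : a = ρ (Φ₀ a) + ρ (Φ₁ a) * w := recon a
      have hsA : ρ (Φ₀ a) = (s₀ : A) + (p : A) * ρ s' := by
        have h : Φ₀ a = ((s₀ : ℕ) : ℤ_[p]) + (p : ℤ_[p]) * s' := by linear_combination hs'
        rw [h, map_add, map_mul, map_natCast, map_natCast]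
      have htA : ρ (Φ₁ a) = (t₀ : A) + (p : A) * ρ t' := by
        have h : Φ₁ a = ((t₀ : ℕ) : ℤ_[p]) + (p : ℤ_[p]) * t' := by linear_combination ht'
        rw [h, map_add, map_mul, map_natCast, map_natCast]
      have h1 : (p : A) ^ (4 + k) ∣
          (u : A) - (1 + (p : A) ^ (3 + k) * ((s₀ : A) + (t₀ : A) * w)) := by
        refine ⟨ρ s' + ρ t' * w, ?_⟩
        rw [ha]
        conv_lhs => rw [ha']
        rw [hsA, htA]
        rw [show (4 + k) = (3 + k) + 1 by omega, pow_succ]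
        ring
      have h2 : (p : A) ^ (4 + k) ∣
          (v : A) - (1 + (p : A) ^ (3 + k) * ((s₀ : A) + (t₀ : A) * w)) := by
        have h2a : (p : A) ^ (4 + k) ∣ (v : A) - (1 + (p : A) ^ (3 + k) * (Ss + Tt)) := by
          refine dvd_trans (pow_dvd_pow _ (by omega : 4 + k ≤ (3 + k) + (3 + k)))
            ⟨Ss * Tt, ?_⟩
          rw [hvval, pow_add]
          ring
        have h2b : (p : A) ^ (4 + k) ∣
            (1 + (p : A) ^ (3 + k) * (Ss + Tt))
              - (1 + (p : A) ^ (3 + k) * ((s₀ : A) + (t₀ : A) * w)) := by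
          refine ⟨(p : A) ^ (2 + k) * ρ c₂ + (t₀ : A) * e
            + (p : A) ^ (2 + k) * ((w + (p : A) * e) ^ 2 * c₃), ?_⟩
          rw [hSs, hTt]
          rw [show (4 + k) = (3 + k) + 1 by omega]
          rw [show (3 + k) = (2 + k) + 1 by omega]
          ring
        have h := dvd_add h2a h2b
        rwa [sub_add_sub_cancel] at h
      have hdiff : (p : A) ^ (4 + k) ∣ (u : A) - (v : A) := by
        have h := dvd_sub h1 h2
        rwa [sub_sub_sub_cancel_right] at h
      obtain ⟨rr, hrr⟩ := hdiff
      have hinv : ((v⁻¹ : Aˣ) : A) * (v : A) = 1 := Units.inv_mul v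
      have huNmem : v⁻¹ * u ∈ onePlusSubgroup ((p : A) ^ (3 + (k + 1))) := by
        refine ⟨rr * ((v⁻¹ : Aˣ) : A), ?_⟩
        rw [show (3 + (k + 1)) = 4 + k by omega]
        rw [Units.val_mul]
        linear_combination ((v⁻¹ : Aˣ) : A) * hrr + hinv
      have hzNmem : zN ∈ Subgroup.map (Units.map (ρ.toMonoidHom))
          (onePlusSubgroup ((p : ℤ_[p]) ^ 3)) := by
        rw [hzN]
        exact pow_mem (Subgroup.mem_map_of_mem _ hz₁mem) s₀
      refine ⟨n + p ^ k * t₀, z * zN, v⁻¹ * u, mul_mem hz hzNmem, huNmem, ?_⟩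
      apply Units.ext
      have hxval : (x : A) = (gu : A) ^ n * (z : A) * (u : A) := by
        rw [hxe]
        simp only [Units.val_mul, Units.val_pow_eq_pow_val]
      have hv2 : (v : A) = (zN : A) * (gu : A) ^ (p ^ k * t₀) := by
        rw [hv, hgP]
        simp only [Units.val_mul, Units.val_pow_eq_pow_val]
      calc ((x : Aˣ) : A) = (gu : A) ^ n * (z : A) * (u : A) := hxval
        _ = (gu : A) ^ n * (z : A) * (u : A) * (((v⁻¹ : Aˣ) : A) * (v : A)) := by
            rw [hinv, mul_one]
        _ = (gu : A) ^ (n + p ^ k * t₀) * ((z : A) * (zN : A))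
              * (((v⁻¹ : Aˣ) : A) * (u : A)) := by
            rw [hv2, pow_add]
            ring
        _ = ((gu ^ (n + p ^ k * t₀) * (z * zN) * (v⁻¹ * u) : Aˣ) : A) := by
            simp only [Units.val_mul, Units.val_pow_eq_pow_val]
  -- every ε-value on U3 is a power of ε gu
  have hεform : ∀ y ∈ onePlusSubgroup ((p : A) ^ 3), ∃ m : ℕ, ε y = ε gu ^ m := by
    intro y hy
    obtain ⟨m, z, u, hz, hu, hye⟩ := hdec o y hy
    obtain ⟨η, hη, rfl⟩ := hz
    refine ⟨m, ?_⟩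
    rw [hye, map_mul, map_mul, map_pow, hεZ η hη, hεO u hu, mul_one, mul_one]
  -- order bookkeeping
  have hgo : ε gu ^ (p ^ o) = 1 := hord₁ gu hg3
  have hfin : IsOfFinOrder (ε gu) :=
    isOfFinOrder_iff_pow_eq_one.mpr ⟨p ^ o, pow_pos hppos o, hgo⟩
  have hdvd : orderOf (ε gu) ∣ p ^ o := orderOf_dvd_of_pow_eq_one hgo
  have hdpos : 0 < orderOf (ε gu) := hfin.orderOf_pos
  have hall : ∀ y ∈ onePlusSubgroup ((p : A) ^ 3), ε y ^ (orderOf (ε gu)) = 1 := by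
    intro y hy
    obtain ⟨m, hm⟩ := hεform y hy
    rw [hm, ← pow_mul, mul_comm, pow_mul, pow_orderOf_eq_one, one_pow]
  have hge : p ^ o ≤ orderOf (ε gu) := hord₂ _ hdpos hall
  have hdeq : orderOf (ε gu) = p ^ o :=
    le_antisymm (Nat.le_of_dvd (pow_pos hppos o) hdvd) hge
  -- conclusion
  apply le_antisymm
  · intro x hx
    rw [Subgroup.mem_inf] at hx
    obtain ⟨hx3, hxk⟩ := hx
    obtain ⟨m, z, u, hz, hu, hxe⟩ := hdec o x hx3
    have hεz1 : ε z = 1 := by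
      obtain ⟨η, hη, rfl⟩ := hz
      exact hεZ η hη
    have hεx : ε x = 1 := hxk
    have hgm : ε gu ^ m = 1 := by
      rw [hxe, map_mul, map_mul, map_pow, hεz1, hεO u hu, mul_one, mul_one] at hεx
      exact hεx
    have hmdvd : p ^ o ∣ m := hdeq ▸ orderOf_dvd_of_pow_eq_one hgm
    obtain ⟨q', hq'⟩ := hmdvd
    have hgumem : gu ^ m ∈ onePlusSubgroup ((p : A) ^ (3 + o)) := by
      obtain ⟨e, he⟩ := hgpow o
      have hbase : gu ^ (p ^ o) ∈ onePlusSubgroup ((p : A) ^ (3 + o)) :=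
        ⟨w + (p : A) * e, by rw [Units.val_pow_eq_pow_val, he]⟩
      rw [hq', pow_mul]
      exact pow_mem hbase q'
    rw [hxe]
    exact mul_mem (mul_mem (Subgroup.mem_sup_right hgumem) (Subgroup.mem_sup_left hz))
      (Subgroup.mem_sup_right hu)
  · apply sup_le
    · intro ξ hξ
      obtain ⟨η, hη, rfl⟩ := hξ
      rw [Subgroup.mem_inf]
      constructor
      · obtain ⟨c, hc⟩ := hη
        refine ⟨ρ c, ?_⟩
        rw [Units.coe_map, hcoe, hc, map_add, map_one, map_mul, map_pow, map_natCast]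
      · exact hεZ η hη
    · intro ξ hξ
      rw [Subgroup.mem_inf]
      obtain ⟨a, ha⟩ := mem_onePlusSubgroup.mp hξ
      constructor
      · refine ⟨(p : A) ^ o * a, ?_⟩
        rw [ha, pow_add]
        ring
      · exact hεO ξ hξ

end MainAbstract

set_option maxHeartbeats 4000000 in
/-- Let `K` be an imaginary quadratic field, `p` a prime, `O_p = O ⊗ ℤ_p`,
and `ε : O_pˣ → ℂˣ` a homomorphism which is quadratic on `ℤ_pˣ` and whose restriction to
`1 + p³O_p` has order exactly `p^o`.  Then the kernel of `ε` inside `1 + p³O_p` is exactly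
`(1 + p³ℤ_p)·(1 + p^{3+o}O_p)`. -/
theorem kernel_of_eps_on_onePlus
    (K : IntermediateField ℚ ℂ) [NumberField ↥K]
    (hdeg : Module.finrank ℚ ↥K = 2) (himag : ∃ x : ↥K, (x : ℂ).im ≠ 0)
    (p : ℕ) [Fact p.Prime] (o : ℕ)
    (ε : ((𝓞 ↥K) ⊗[ℤ] ℤ_[p])ˣ →* ℂˣ)
    -- ε is quadratic on ℤ_pˣ (viewed inside O_pˣ)
    (hquad : ∀ u : ℤ_[p]ˣ,
      (ε (Units.map ((Algebra.TensorProduct.includeRight :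
        ℤ_[p] →ₐ[ℤ] (𝓞 ↥K) ⊗[ℤ] ℤ_[p]).toRingHom.toMonoidHom) u)) ^ 2 = 1)
    (U3 : Subgroup ((𝓞 ↥K) ⊗[ℤ] ℤ_[p])ˣ)
    (hU3 : U3 = onePlusSubgroup ((p : (𝓞 ↥K) ⊗[ℤ] ℤ_[p]) ^ 3))
    (UZ3 : Subgroup ((𝓞 ↥K) ⊗[ℤ] ℤ_[p])ˣ)
    (hUZ3 : UZ3 = Subgroup.map
      (Units.map ((Algebra.TensorProduct.includeRight :
        ℤ_[p] →ₐ[ℤ] (𝓞 ↥K) ⊗[ℤ] ℤ_[p]).toRingHom.toMonoidHom))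
      (onePlusSubgroup ((p : ℤ_[p]) ^ 3)))
    (U3o : Subgroup ((𝓞 ↥K) ⊗[ℤ] ℤ_[p])ˣ)
    (hU3o : U3o = onePlusSubgroup ((p : (𝓞 ↥K) ⊗[ℤ] ℤ_[p]) ^ (3 + o)))
    -- the restriction of ε to 1 + p³O_p has order exactly p^o
    (hord₁ : ∀ x ∈ U3, ε x ^ (p ^ o) = 1)
    (hord₂ : ∀ k : ℕ, 0 < k → (∀ x ∈ U3, ε x ^ k = 1) → p ^ o ≤ k) :
    U3 ⊓ ε.ker = UZ3 ⊔ U3o := by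
  clear himag
  subst hU3 hUZ3 hU3o
  obtain ⟨w, Φ₀, Φ₁, key0, key1, recon⟩ := exists_coords p K hdeg
  exact main_abstract (Algebra.TensorProduct.includeRight :
      ℤ_[p] →ₐ[ℤ] (𝓞 ↥K) ⊗[ℤ] ℤ_[p]).toRingHom w Φ₀.toAddMonoidHom Φ₁.toAddMonoidHom
    (fun s t => key0 s t) (fun s t => key1 s t) (fun x => recon x) o ε hquad hord₁ hord₂
end

section
/- Let K be an imaginary quadratic field with ring of integers O, p a rational prime, O_p = O ⊗_ℤ ℤ_p, and τ ∈ O such that {1, τ} is a ℤ-basis of O (so {1, τ⊗1} is a ℤ_p-basis of O_p). Let h be a positive integer and w_0 ∈ O a nonzero element whose image in O_p is a unit. Let x ∈ S_p and ω ∈ H_p, and write ωx = α + β·(τ⊗1) with α, β ∈ ℤ_p. Then there exist η ∈ ℤ_p^× and elements α', β' ∈ ℤ_p that are algebraic over ℚ such that α = ηα' and β = ηβ'. -/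
set_option maxHeartbeats 1000000
set_option synthInstance.maxHeartbeats 400000

open NumberField
open scoped TensorProduct

variable (K : IntermediateField ℚ ℂ) [NumberField ↥K] (p : ℕ) [Fact p.Prime]

/-- `O_p = O ⊗_ℤ ℤ_p`. -/
abbrev Op : Type _ := (𝓞 ↥K) ⊗[ℤ] ℤ_[p]

/-- The natural map `O → O_p`. -/
noncomputable def incL : 𝓞 ↥K →+* Op K p :=
  (Algebra.TensorProduct.includeLeft : 𝓞 ↥K →ₐ[ℤ] (𝓞 ↥K) ⊗[ℤ] ℤ_[p]).toRingHom

/-- The natural map `ℤ_p → O_p`. -/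
noncomputable def incR : ℤ_[p] →+* Op K p :=
  (Algebra.TensorProduct.includeRight : ℤ_[p] →ₐ[ℤ] (𝓞 ↥K) ⊗[ℤ] ℤ_[p]).toRingHom

/-- `ℤ_pˣ` regarded as a subgroup of `O_pˣ`. -/
noncomputable def ZpUnits : Subgroup (Op K p)ˣ :=
  (Units.map (incR K p).toMonoidHom).range

/-- `H_p = {a ∈ O_pˣ : a^m ∈ ℤ_pˣ for some positive integer m}`. -/
noncomputable def Hp : Set (Op K p)ˣ :=
  {a : (Op K p)ˣ | ∃ m : ℕ, 0 < m ∧ a ^ m ∈ ZpUnits K p}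

/-! ### Auxiliary material -/

instance : CharZero (AlgebraicClosure ℚ_[p]) :=
  charZero_of_injective_algebraMap (algebraMap ℚ_[p] _).injective

/-- The embedding `ℤ_p → Ω` where `Ω` is an algebraic closure of `ℚ_p`. -/
noncomputable def padicEmb : ℤ_[p] →+* AlgebraicClosure ℚ_[p] :=
  (algebraMap ℚ_[p] (AlgebraicClosure ℚ_[p])).comp (PadicInt.Coe.ringHom)

lemma padicEmb_injective : Function.Injective (padicEmb p) :=
  (algebraMap ℚ_[p] (AlgebraicClosure ℚ_[p])).injective.comp Subtype.coe_injective

lemma isAlgebraic_of_padicEmb (x : ℤ_[p])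
    (hx : IsAlgebraic ℚ (padicEmb p x)) : IsAlgebraic ℤ x := by
  have h1 : IsAlgebraic ℤ (padicEmb p x) :=
    (IsFractionRing.isAlgebraic_iff ℤ ℚ (AlgebraicClosure ℚ_[p])).mpr hx
  exact h1.of_ringHom_of_comp_eq (RingHom.id ℤ) (padicEmb p)
    Function.surjective_id (padicEmb_injective p) (Subsingleton.elim _ _)

lemma isAlgebraic_p_pow (n : ℕ) : IsAlgebraic ℤ ((p : ℤ_[p]) ^ n) := by
  refine ⟨Polynomial.X - Polynomial.C ((p : ℤ) ^ n), ?_, ?_⟩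
  · exact (Polynomial.monic_X_sub_C _).ne_zero
  · simp only [map_sub, Polynomial.aeval_X, Polynomial.aeval_C]
    push_cast
    ring

lemma isAlgebraic_zero_padic : IsAlgebraic ℤ (0 : ℤ_[p]) :=
  ⟨Polynomial.X, Polynomial.X_ne_zero, by simp⟩

/-- Extension of an embedding `σ : K → Ω` to `O_p → Ω`. -/
noncomputable def fEmb (σ : ↥K →+* AlgebraicClosure ℚ_[p]) :
    Op K p →+* AlgebraicClosure ℚ_[p] :=
  (Algebra.TensorProduct.lift
    ((σ.comp (algebraMap (𝓞 ↥K) ↥K)).toIntAlgHom)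
    ((padicEmb p).toIntAlgHom)
    (fun _ _ => Commute.all _ _)).toRingHom

@[simp] lemma fEmb_incL (σ : ↥K →+* AlgebraicClosure ℚ_[p]) (z : 𝓞 ↥K) :
    fEmb K p σ (incL K p z) = σ (algebraMap (𝓞 ↥K) ↥K z) := by
  simp [fEmb, incL, Algebra.TensorProduct.lift_tmul]

@[simp] lemma fEmb_incR (σ : ↥K →+* AlgebraicClosure ℚ_[p]) (c : ℤ_[p]) :
    fEmb K p σ (incR K p c) = padicEmb p c := by
  simp [fEmb, incR, Algebra.TensorProduct.lift_tmul]

/-- There are two embeddings of `K` into `Ω` that differ on `τ`. -/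
lemma exists_embeddings_ne_on_tau (hdeg : Module.finrank ℚ ↥K = 2)
    (τ : 𝓞 ↥K) (hτ : ∀ z : 𝓞 ↥K, ∃! c : ℤ × ℤ, z = (c.1 : 𝓞 ↥K) + (c.2 : 𝓞 ↥K) * τ) :
    ∃ σ₁ σ₂ : ↥K →+* AlgebraicClosure ℚ_[p],
      σ₁ (algebraMap (𝓞 ↥K) ↥K τ) ≠ σ₂ (algebraMap (𝓞 ↥K) ↥K τ) := by
  have hcard : Fintype.card (↥K →+* AlgebraicClosure ℚ_[p]) = 2 := by
    rw [NumberField.Embeddings.card ↥K (AlgebraicClosure ℚ_[p]), hdeg]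
  obtain ⟨σ₁, σ₂, hne⟩ := Fintype.exists_pair_of_one_lt_card
    (by omega : 1 < Fintype.card (↥K →+* AlgebraicClosure ℚ_[p]))
  refine ⟨σ₁, σ₂, fun heq => hne ?_⟩
  have hli : LinearIndependent ℚ ![(1 : ↥K), algebraMap (𝓞 ↥K) ↥K τ] := by
    rw [← LinearIndependent.iff_fractionRing ℤ ℚ, LinearIndependent.pair_iff]
    intro s t hst
    have h0 : algebraMap (𝓞 ↥K) ↥K ((s : 𝓞 ↥K) + (t : 𝓞 ↥K) * τ) = 0 := by
      rw [map_add, map_mul, map_intCast, map_intCast]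
      rw [zsmul_eq_mul, zsmul_eq_mul, mul_one] at hst
      exact hst
    have h1 : (s : 𝓞 ↥K) + (t : 𝓞 ↥K) * τ = 0 := by
      apply RingOfIntegers.coe_injective
      rw [h0, map_zero]
    have h2 : ((s, t) : ℤ × ℤ) = ((0, 0) : ℤ × ℤ) :=
      (hτ 0).unique (show (0 : 𝓞 ↥K) = _ + _ * τ from h1.symm)
        (show (0 : 𝓞 ↥K) = _ + _ * τ by push_cast; ring)
    exact ⟨congrArg Prod.fst h2, congrArg Prod.snd h2⟩
  have hlin : σ₁.toRatAlgHom.toLinearMap = σ₂.toRatAlgHom.toLinearMap := by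
    apply Module.Basis.ext (basisOfLinearIndependentOfCardEqFinrank hli (by simp [hdeg]))
    intro i
    rw [coe_basisOfLinearIndependentOfCardEqFinrank]
    fin_cases i <;> simp [RingHom.toRatAlgHom, heq]
  have hAlg : σ₁.toRatAlgHom = σ₂.toRatAlgHom := AlgHom.toLinearMap_injective hlin
  exact RingHom.ext fun z => DFunLike.congr_fun hAlg z

lemma aux_pow {M : Type*} [CommMonoid M] (a b c : M) (h k m : ℕ) :
    (a * b) ^ (h * (k * m)) * c ^ (k * m) = (a ^ k) ^ (h * m) * ((b ^ h * c) ^ m) ^ k := by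
  rw [mul_pow, ← pow_mul, ← pow_mul, mul_pow, ← pow_mul,
    show h * (k * m) = h * k * m from by ring,
    show k * (h * m) = h * k * m from by ring,
    show h * (m * k) = h * k * m from by ring,
    show m * k = k * m from by ring,
    mul_assoc]

section AlgebraicOps

variable {F E : Type*} [Field F] [Field E] [Algebra F E]

lemma IsAlgebraic.mul' {x y : E} (hx : IsAlgebraic F x) (hy : IsAlgebraic F y) :
    IsAlgebraic F (x * y) :=
  isAlgebraic_iff_isIntegral.mpr (hx.isIntegral.mul hy.isIntegral)

lemma IsAlgebraic.sub' {x y : E} (hx : IsAlgebraic F x) (hy : IsAlgebraic F y) :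
    IsAlgebraic F (x - y) :=
  isAlgebraic_iff_isIntegral.mpr (hx.isIntegral.sub hy.isIntegral)

lemma IsAlgebraic.div' {x y : E} (hx : IsAlgebraic F x) (hy : IsAlgebraic F y) :
    IsAlgebraic F (x / y) := by
  rw [div_eq_mul_inv]
  exact hx.mul' hy.inv

lemma IsAlgebraic.pow' {x : E} (hx : IsAlgebraic F x) (n : ℕ) :
    IsAlgebraic F (x ^ n) :=
  isAlgebraic_iff_isIntegral.mpr (hx.isIntegral.pow n)

end AlgebraicOps

/-- Let `{1, τ}` be a `ℤ`-basis of `O`, `h` a positive integer, `w₀ ∈ O`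
nonzero with unit image in `O_p`, `x ∈ S_p` and `ω ∈ H_p`; write `ωx = α + β·(τ⊗1)` with
`α, β ∈ ℤ_p`.  Then `α = ηα'` and `β = ηβ'` for some `η ∈ ℤ_pˣ` and `α', β' ∈ ℤ_p`
algebraic over `ℚ`. -/
theorem coords_are_unit_times_algebraic
    (hdeg : Module.finrank ℚ ↥K = 2) (himag : ∃ y : ↥K, (y : ℂ).im ≠ 0)
    (τ : 𝓞 ↥K) (hτ : ∀ z : 𝓞 ↥K, ∃! c : ℤ × ℤ, z = (c.1 : 𝓞 ↥K) + (c.2 : 𝓞 ↥K) * τ)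
    (h : ℕ) (hh : 0 < h)
    (w₀ : 𝓞 ↥K) (hw₀ : w₀ ≠ 0)
    (u₀ : (Op K p)ˣ) (hu₀ : (u₀ : Op K p) = incL K p w₀)
    -- `x ∈ S_p`, i.e. `x^h ∈ H_p·w₀⁻¹`
    (x : (Op K p)ˣ) (hx : x ^ h * u₀ ∈ Hp K p)
    (ω : (Op K p)ˣ) (hω : ω ∈ Hp K p)
    (α β : ℤ_[p])
    (hαβ : ((ω * x : (Op K p)ˣ) : Op K p)
      = incR K p α + incR K p β * incL K p τ) :
    ∃ (η : ℤ_[p]ˣ) (α' β' : ℤ_[p]), IsAlgebraic ℤ α' ∧ IsAlgebraic ℤ β' ∧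
      α = (η : ℤ_[p]) * α' ∧ β = (η : ℤ_[p]) * β' := by
  classical
  -- easy case `β = 0` first
  by_cases hβ : β = 0
  · by_cases hα : α = 0
    · exact ⟨1, 0, 0, isAlgebraic_zero_padic p, isAlgebraic_zero_padic p,
        by simp [hα], by simp [hβ]⟩
    · exact ⟨PadicInt.unitCoeff hα, (p : ℤ_[p]) ^ (α.valuation), 0,
        isAlgebraic_p_pow p _, isAlgebraic_zero_padic p,
        PadicInt.unitCoeff_spec hα, by simp [hβ]⟩
  -- nontrivial case
  obtain ⟨k, hk0, hωk⟩ := hω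
  obtain ⟨ζ₁, hζ₁⟩ := hωk
  obtain ⟨m, hm0, hxm⟩ := hx
  obtain ⟨ζ₂, hζ₂⟩ := hxm
  set N : ℕ := h * (k * m) with hN
  have hN0 : 0 < N := Nat.mul_pos hh (Nat.mul_pos hk0 hm0)
  have e₁ : incR K p (ζ₁ : ℤ_[p]) = (ω : Op K p) ^ k := by
    rw [← Units.val_pow_eq_pow_val, ← hζ₁, Units.coe_map]; rfl
  have e₂ : incR K p (ζ₂ : ℤ_[p]) = ((x : Op K p) ^ h * incL K p w₀) ^ m := by
    rw [← hu₀, ← Units.val_pow_eq_pow_val, ← Units.val_mul, ← Units.val_pow_eq_pow_val,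
      ← hζ₂, Units.coe_map]; rfl
  set ζ : ℤ_[p]ˣ := ζ₁ ^ (h * m) * ζ₂ ^ k with hζ
  have hE : ((ω * x : (Op K p)ˣ) : Op K p) ^ N * (incL K p w₀) ^ (k * m)
      = incR K p (ζ : ℤ_[p]) := by
    rw [hζ, Units.val_mul, Units.val_mul, Units.val_pow_eq_pow_val, Units.val_pow_eq_pow_val,
      map_mul, map_pow, map_pow, e₁, e₂, hN, aux_pow]
  -- two distinct embeddings
  obtain ⟨σ₁, σ₂, hτ12⟩ := exists_embeddings_ne_on_tau K p hdeg τ hτ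
  set Ω := AlgebraicClosure ℚ_[p] with hΩ
  set g : ℤ_[p] →+* Ω := padicEmb p with hg
  set τK := algebraMap (𝓞 ↥K) ↥K τ with hτKdef
  set w₀K := algebraMap (𝓞 ↥K) ↥K w₀ with hw₀Kdef
  have hy : ∀ σ : ↥K →+* Ω,
      fEmb K p σ ((ω * x : (Op K p)ˣ) : Op K p) = g α + g β * σ τK := by
    intro σ
    rw [hαβ, map_add, map_mul, fEmb_incL, fEmb_incR, fEmb_incR]
  have Eq12 : (g α + g β * σ₁ τK) ^ N * (σ₁ w₀K) ^ (k * m)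
      = (g α + g β * σ₂ τK) ^ N * (σ₂ w₀K) ^ (k * m) := by
    have E₁ := congrArg (fEmb K p σ₁) hE
    have E₂ := congrArg (fEmb K p σ₂) hE
    rw [map_mul, map_pow, map_pow, hy σ₁, fEmb_incL, fEmb_incR] at E₁
    rw [map_mul, map_pow, map_pow, hy σ₂, fEmb_incL, fEmb_incR] at E₂
    rw [E₁, E₂]
  -- nonvanishing facts
  have hw : ∀ σ : ↥K →+* Ω, σ w₀K ≠ 0 := by
    intro σ
    have hu : IsUnit (fEmb K p σ (u₀ : Op K p)) := u₀.isUnit.map (fEmb K p σ)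
    rw [hu₀, fEmb_incL] at hu
    exact hu.ne_zero
  have hyne : ∀ σ : ↥K →+* Ω, g α + g β * σ τK ≠ 0 := by
    intro σ
    have hu : IsUnit (fEmb K p σ ((ω * x : (Op K p)ˣ) : Op K p)) :=
      (ω * x).isUnit.map (fEmb K p σ)
    rw [hy σ] at hu
    exact hu.ne_zero
  -- algebraicity of embedded elements of `K`
  have halgσ : ∀ (σ : ↥K →+* Ω) (z : ↥K), IsAlgebraic ℚ (σ z) := fun σ z =>
    (Algebra.IsAlgebraic.isAlgebraic z).algHom σ.toRatAlgHom
  -- the ratio `r`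
  have hb : g β ≠ 0 := fun h0 => hβ (padicEmb_injective p (by rw [map_zero]; exact h0))
  set r : Ω := (g α + g β * σ₁ τK) / (g α + g β * σ₂ τK) with hr
  have hrN : r ^ N = (σ₂ w₀K) ^ (k * m) / (σ₁ w₀K) ^ (k * m) := by
    rw [hr, div_pow, div_eq_div_iff (pow_ne_zero _ (hyne σ₂)) (pow_ne_zero _ (hw σ₁))]
    rw [Eq12]; ring
  have hr_alg : IsAlgebraic ℚ r := by
    refine IsAlgebraic.of_pow hN0 ?_
    rw [hrN]
    exact ((halgσ σ₂ w₀K).pow' _).div' ((halgσ σ₁ w₀K).pow' _)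
  have hr1 : r ≠ 1 := by
    intro h1
    rw [hr, div_eq_iff (hyne σ₂), one_mul] at h1
    have hzero : g β * (σ₁ τK - σ₂ τK) = 0 := by linear_combination h1
    rcases mul_eq_zero.mp hzero with h' | h'
    · exact hb h'
    · exact hτ12 (sub_eq_zero.mp h')
  have hmain : g α + g β * σ₁ τK = r * (g α + g β * σ₂ τK) := by
    rw [hr, div_mul_cancel₀ _ (hyne σ₂)]
  set θ : Ω := (r * σ₂ τK - σ₁ τK) / (1 - r) with hθ
  have h1r : (1 : Ω) - r ≠ 0 := sub_ne_zero.mpr (Ne.symm hr1)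
  have hθb : g α = θ * g β := by
    rw [hθ, div_mul_eq_mul_div, eq_div_iff h1r]
    linear_combination hmain
  have hθ_alg : IsAlgebraic ℚ θ := by
    refine IsAlgebraic.div' ?_ ?_
    · exact (hr_alg.mul' (halgσ σ₂ τK)).sub' (halgσ σ₁ τK)
    · exact isAlgebraic_one.sub' hr_alg
  -- conclude
  set η : ℤ_[p]ˣ := PadicInt.unitCoeff hβ with hηdef
  set b0 : ℕ := (β.valuation) with hb0
  have hβspec : β = (η : ℤ_[p]) * (p : ℤ_[p]) ^ b0 := PadicInt.unitCoeff_spec hβ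
  refine ⟨η, (↑η⁻¹ : ℤ_[p]) * α, (p : ℤ_[p]) ^ b0, ?_, isAlgebraic_p_pow p b0, ?_, hβspec⟩
  · apply isAlgebraic_of_padicEmb
    have hinv : g (↑η⁻¹ : ℤ_[p]) * g (η : ℤ_[p]) = 1 := by
      rw [← map_mul, Units.inv_mul, map_one]
    have hgb : g β = g (η : ℤ_[p]) * (p : Ω) ^ b0 := by
      rw [hβspec, map_mul, map_pow, map_natCast]
    have hgα' : g ((↑η⁻¹ : ℤ_[p]) * α) = θ * (p : Ω) ^ b0 := by
      rw [map_mul]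
      calc g (↑η⁻¹ : ℤ_[p]) * g α
          = g (↑η⁻¹ : ℤ_[p]) * (θ * g β) := by rw [← hθb]
        _ = θ * (p : Ω) ^ b0 * (g (↑η⁻¹ : ℤ_[p]) * g (η : ℤ_[p])) := by rw [hgb]; ring
        _ = θ * (p : Ω) ^ b0 := by rw [hinv, mul_one]
    rw [hg] at hgα'
    rw [hgα']
    refine hθ_alg.mul' ?_
    rw [show ((p : Ω)) = algebraMap ℚ Ω (p : ℚ) from (map_natCast _ p).symm]
    exact (isAlgebraic_algebraMap _).pow' b0
  · rw [← mul_assoc, Units.mul_inv, one_mul]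
end

section
/- Let P be a finite set of rational primes, and for each p ∈ P let γ_p ∈ ℚ_p be algebraic over ℚ. Let κ > 2 be a real number. Suppose that there are only finitely many pairs of coprime rational integers (u, v) satisfying ∏_{p∈P} |u − vγ_p|_p ≤ (max(|u|,|v|))^{−κ}. Then there exists a constant k > 0 such that ∏_{p∈P} |u − vγ_p|_p > k·(max(|u|,|v|))^{−κ} for all pairs of rational integers (u, v), not both zero, for which ∏_{p∈P} |u − vγ_p|_p ≠ 0. -/
instance (p : Nat.Primes) : Fact (p : ℕ).Prime := ⟨p.2⟩

lemma ridout_aux_norm (p : Nat.Primes) (d : ℕ) (hd : d ≠ 0) :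
    ‖(d : ℚ_[(p : ℕ)])‖ = (((p : ℕ) : ℝ) ^ d.factorization (p : ℕ))⁻¹ := by
  have h1 : ((d : ℚ_[(p : ℕ)])) = (((d : ℚ)) : ℚ_[(p : ℕ)]) := by norm_cast
  rw [h1, Padic.eq_padicNorm,
    padicNorm.eq_zpow_of_nonzero (by exact_mod_cast hd)]
  rw [Nat.factorization_def d p.2]
  push_cast
  rw [padicValRat.of_nat, zpow_neg, zpow_natCast]

lemma ridout_aux_dvd (P : Finset Nat.Primes) (d : ℕ) (hd : d ≠ 0) :
    (∏ p ∈ P, (p : ℕ) ^ d.factorization (p : ℕ)) ∣ d := by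
  classical
  set t : Finset ℕ := P.image (fun p : Nat.Primes => (p : ℕ)) with ht
  have h2 : (∏ p ∈ P, (p : ℕ) ^ d.factorization (p : ℕ))
      = ∏ q ∈ t, q ^ d.factorization q := by
    rw [ht, Finset.prod_image]
    intro x _ y _ h
    exact Subtype.coe_injective h
  rw [h2]
  have h3 : (∏ q ∈ t, q ^ d.factorization q) ∣
      ∏ q ∈ t ∪ d.primeFactors, q ^ d.factorization q :=
    Finset.prod_dvd_prod_of_subset _ _ _ Finset.subset_union_left
  have h4 : ∏ q ∈ t ∪ d.primeFactors, q ^ d.factorization q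
      = ∏ q ∈ d.primeFactors, q ^ d.factorization q := by
    refine (Finset.prod_subset Finset.subset_union_right ?_).symm
    intro q _ hq'
    have h0 : d.factorization q = 0 := by
      rwa [← Finsupp.notMem_support_iff, Nat.support_factorization]
    simp [h0]
  have h5 : ∏ q ∈ d.primeFactors, q ^ d.factorization q = d := by
    rw [← Nat.support_factorization]
    exact Nat.factorization_prod_pow_eq_self hd
  rw [h4, h5] at h3
  exact h3

lemma ridout_aux_prod (P : Finset Nat.Primes) (d : ℕ) (hd : d ≠ 0) :
    ((d : ℝ))⁻¹ ≤ ∏ p ∈ P, ‖(d : ℚ_[(p : ℕ)])‖ := by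
  have hN : (0:ℕ) < ∏ p ∈ P, (p : ℕ) ^ d.factorization (p : ℕ) :=
    Finset.prod_pos fun p _ => pow_pos p.2.pos _
  have hle : (∏ p ∈ P, (p : ℕ) ^ d.factorization (p : ℕ)) ≤ d :=
    Nat.le_of_dvd (Nat.pos_of_ne_zero hd) (ridout_aux_dvd P d hd)
  have hprod : ∏ p ∈ P, ‖(d : ℚ_[(p : ℕ)])‖
      = ((∏ p ∈ P, (p : ℕ) ^ d.factorization (p : ℕ) : ℕ) : ℝ)⁻¹ := by
    push_cast
    rw [← Finset.prod_inv_distrib]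
    exact Finset.prod_congr rfl fun p _ => by rw [ridout_aux_norm p d hd]
  rw [hprod]
  apply inv_anti₀
  · exact_mod_cast hN
  · exact_mod_cast hle


/-- Let `P` be a finite set of primes and `γ_p ∈ ℚ_p` algebraic over `ℚ`
for `p ∈ P`, and `κ > 2`.  If only finitely many coprime pairs `(u, v)` satisfy
`∏_{p∈P} |u − vγ_p|_p ≤ max(|u|,|v|)^{−κ}`, then there is `k > 0` with
`∏_{p∈P} |u − vγ_p|_p > k·max(|u|,|v|)^{−κ}` whenever the left-hand side is nonzero. -/
theorem ridout_consequence
    (P : Finset Nat.Primes) (γ : (p : Nat.Primes) → ℚ_[(p : ℕ)])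
    (halg : ∀ p ∈ P, IsAlgebraic ℚ (γ p))
    (κ : ℝ) (hκ : 2 < κ)
    (hfin : {uv : ℤ × ℤ | Int.gcd uv.1 uv.2 = 1 ∧
      (∏ p ∈ P, ‖(uv.1 : ℚ_[(p : ℕ)]) - (uv.2 : ℚ_[(p : ℕ)]) * γ p‖) ≤
        (max (|uv.1| : ℝ) (|uv.2| : ℝ)) ^ (-κ)}.Finite) :
    ∃ k : ℝ, 0 < k ∧ ∀ u v : ℤ, ¬ (u = 0 ∧ v = 0) →
      (∏ p ∈ P, ‖(u : ℚ_[(p : ℕ)]) - (v : ℚ_[(p : ℕ)]) * γ p‖) ≠ 0 →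
      k * (max (|u| : ℝ) (|v| : ℝ)) ^ (-κ) <
        ∏ p ∈ P, ‖(u : ℚ_[(p : ℕ)]) - (v : ℚ_[(p : ℕ)]) * γ p‖ := by
  classical
  set f : ℤ × ℤ → ℝ :=
    fun uv => ∏ p ∈ P, ‖(uv.1 : ℚ_[(p : ℕ)]) - (uv.2 : ℚ_[(p : ℕ)]) * γ p‖ with hf
  set M : ℤ × ℤ → ℝ := fun uv => max (|uv.1| : ℝ) (|uv.2| : ℝ) with hM
  -- set of exceptional pairs
  set T : Finset (ℤ × ℤ) := hfin.toFinset.filter (fun uv => f uv ≠ 0) with hT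
  set r : ℤ × ℤ → ℝ := fun uv => f uv * M uv ^ κ with hr
  set F : Finset ℝ := insert (1 : ℝ) (T.image r) with hF
  have hFne : F.Nonempty := ⟨1, Finset.mem_insert_self _ _⟩
  -- positivity facts
  have hMpos : ∀ uv : ℤ × ℤ, ¬(uv.1 = 0 ∧ uv.2 = 0) → 0 < M uv := by
    rintro ⟨u, v⟩ huv
    have : u ≠ 0 ∨ v ≠ 0 := by tauto
    rcases this with h | h
    · exact lt_of_lt_of_le (by exact_mod_cast abs_pos.mpr h) (le_max_left _ _)
    · exact lt_of_lt_of_le (by exact_mod_cast abs_pos.mpr h) (le_max_right _ _)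
  have hFpos : ∀ x ∈ F, 0 < x := by
    intro x hx
    rcases Finset.mem_insert.mp hx with rfl | hx
    · exact one_pos
    · obtain ⟨uv, huv, rfl⟩ := Finset.mem_image.mp hx
      rw [hT, Finset.mem_filter, Set.Finite.mem_toFinset] at huv
      obtain ⟨⟨hgcd, _⟩, hfne⟩ := huv
      have hfpos : 0 < f uv :=
        lt_of_le_of_ne (Finset.prod_nonneg fun p _ => norm_nonneg _) (Ne.symm hfne)
      have hMp : 0 < M uv := by
        apply hMpos
        rintro ⟨h1, h2⟩
        rw [h1, h2] at hgcd
        simp at hgcd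
      exact mul_pos hfpos (Real.rpow_pos_of_pos hMp κ)
  set k : ℝ := F.min' hFne / 2 with hk
  have hkpos : 0 < k := by
    have := hFpos _ (F.min'_mem hFne)
    positivity
  have hklt : ∀ x ∈ F, k < x := by
    intro x hx
    have h1 := hFpos _ (F.min'_mem hFne)
    have h2 := F.min'_le x hx
    rw [hk]
    linarith
  have hk1 : k < 1 := hklt 1 (Finset.mem_insert_self _ _)
  -- key step: coprime case
  have key : ∀ u v : ℤ, Int.gcd u v = 1 → f (u, v) ≠ 0 →
      k * M (u, v) ^ (-κ) < f (u, v) := by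
    intro u v hgcd hfne
    have hne : ¬((u, v).1 = 0 ∧ (u, v).2 = 0) := by
      rintro ⟨h1, h2⟩
      simp only at h1 h2
      rw [h1, h2] at hgcd
      simp at hgcd
    have hMp : 0 < M (u, v) := hMpos _ hne
    have hMκpos : 0 < M (u, v) ^ κ := Real.rpow_pos_of_pos hMp κ
    have hMneg : M (u, v) ^ (-κ) = (M (u, v) ^ κ)⁻¹ := Real.rpow_neg hMp.le κ
    by_cases hS : (u, v) ∈ hfin.toFinset
    · have hmem : r (u, v) ∈ F := by
        refine Finset.mem_insert_of_mem (Finset.mem_image_of_mem r ?_)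
        rw [hT, Finset.mem_filter]
        exact ⟨hS, hfne⟩
      have := hklt _ hmem
      calc k * M (u, v) ^ (-κ) < r (u, v) * M (u, v) ^ (-κ) := by
            apply mul_lt_mul_of_pos_right this (Real.rpow_pos_of_pos hMp _)
        _ = f (u, v) := by
            rw [hr, hMneg]
            field_simp
    · rw [Set.Finite.mem_toFinset, Set.mem_setOf_eq, not_and_or] at hS
      have hgt : M (u, v) ^ (-κ) < f (u, v) := by
        rcases hS with h | h
        · exact absurd hgcd h
        · exact lt_of_not_ge h
      calc k * M (u, v) ^ (-κ) < 1 * M (u, v) ^ (-κ) :=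
            mul_lt_mul_of_pos_right hk1 (Real.rpow_pos_of_pos hMp _)
        _ = M (u, v) ^ (-κ) := one_mul _
        _ < f (u, v) := hgt
  refine ⟨k, hkpos, ?_⟩
  intro u v hne hfne
  have hfne' : f (u, v) ≠ 0 := hfne
  set d : ℕ := Int.gcd u v with hd
  have hd0 : d ≠ 0 := by
    rw [hd]
    intro h
    exact hne (Int.gcd_eq_zero_iff.mp h)
  have hdpos : (0:ℝ) < (d:ℝ) := by exact_mod_cast Nat.pos_of_ne_zero hd0
  set u' : ℤ := u / (d : ℤ) with hu'
  set v' : ℤ := v / (d : ℤ) with hv'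
  have hu : u = (d : ℤ) * u' := (Int.mul_ediv_cancel' (Int.gcd_dvd_left u v)).symm
  have hv : v = (d : ℤ) * v' := (Int.mul_ediv_cancel' (Int.gcd_dvd_right u v)).symm
  have hgcd' : Int.gcd u' v' = 1 :=
    Int.gcd_div_gcd_div_gcd (Nat.pos_of_ne_zero hd0)
  have hfactor : f (u, v) = (∏ p ∈ P, ‖((d : ℤ) : ℚ_[(p : ℕ)])‖) * f (u', v') := by
    rw [hf, ← Finset.prod_mul_distrib]
    refine Finset.prod_congr rfl fun p _ => ?_
    rw [← norm_mul]
    congr 1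
    simp only
    rw [hu, hv]
    push_cast
    ring
  have hfne2 : f (u', v') ≠ 0 := by
    intro h
    rw [hfactor, h, mul_zero] at hfne'
    exact hfne' rfl
  have hkey := key u' v' hgcd' hfne2
  have hne' : ¬((u', v').1 = 0 ∧ (u', v').2 = 0) := by
    rintro ⟨h1, h2⟩
    simp only at h1 h2
    rw [h1, h2] at hgcd'
    simp at hgcd'
  have hM'pos : 0 < M (u', v') := hMpos _ hne'
  have hMrel : M (u, v) = (d : ℝ) * M (u', v') := by
    rw [hM]
    simp only
    rw [hu, hv]
    push_cast
    rw [abs_mul, abs_mul, abs_of_nonneg hdpos.le, mul_max_of_nonneg _ _ hdpos.le]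
  have hone_le_d : (1:ℝ) ≤ (d:ℝ) := by
    exact_mod_cast Nat.one_le_iff_ne_zero.mpr hd0
  have hfnonneg : 0 ≤ f (u', v') := Finset.prod_nonneg fun p _ => norm_nonneg _
  calc k * M (u, v) ^ (-κ)
      = k * ((d:ℝ) ^ (-κ) * M (u', v') ^ (-κ)) := by
        rw [hMrel, Real.mul_rpow hdpos.le hM'pos.le]
    _ ≤ k * ((d:ℝ)⁻¹ * M (u', v') ^ (-κ)) := by
        refine mul_le_mul_of_nonneg_left ?_ hkpos.le
        refine mul_le_mul_of_nonneg_right ?_ (Real.rpow_pos_of_pos hM'pos _).le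
        calc (d:ℝ) ^ (-κ) ≤ (d:ℝ) ^ (-1 : ℝ) :=
              Real.rpow_le_rpow_of_exponent_le hone_le_d (by linarith)
          _ = (d:ℝ)⁻¹ := Real.rpow_neg_one _
    _ = (k * M (u', v') ^ (-κ)) * (d:ℝ)⁻¹ := by ring
    _ < f (u', v') * (d:ℝ)⁻¹ := mul_lt_mul_of_pos_right hkey (inv_pos.mpr hdpos)
    _ ≤ f (u', v') * (∏ p ∈ P, ‖((d : ℤ) : ℚ_[(p : ℕ)])‖) := by
        refine mul_le_mul_of_nonneg_left ?_ hfnonneg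
        have h := ridout_aux_prod P d hd0
        have hcast : ∀ p : Nat.Primes, ((d : ℤ) : ℚ_[(p : ℕ)]) = ((d : ℕ) : ℚ_[(p : ℕ)]) := by
          intro p; push_cast; ring
        calc ((d:ℝ))⁻¹ ≤ ∏ p ∈ P, ‖((d : ℕ) : ℚ_[(p : ℕ)])‖ := h
          _ = ∏ p ∈ P, ‖((d : ℤ) : ℚ_[(p : ℕ)])‖ :=
            Finset.prod_congr rfl fun p _ => by rw [hcast p]
    _ = f (u, v) := by rw [hfactor]; ring
end

section
/- Let m be a positive integer and χ a nontrivial Dirichlet character modulo m with complex values. Then the series ∑_{n=1}^∞ χ(n)/n converges, and lim_{x→∞} ∑_{n=1}^∞ χ(n) n^{−1} e^{−n²/x} = ∑_{n=1}^∞ χ(n)/n = L(1, χ), where the limit is taken as the real number x tends to infinity. -/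
open Filter Finset Topology

private lemma div_le_div_of_nonneg_right' {a b c : ℝ} (h : a ≤ b) (hc : 0 < c) :
    a / c ≤ b / c := by
  gcongr

/-- Abel summation identity for partial sums. -/
private lemma sum_abel_id (a : ℕ → ℂ) (c : ℕ → ℝ) (N : ℕ) :
    ∑ n ∈ range N, a n * (c n : ℂ)
      = (∑ n ∈ range N, a n) * (c N : ℂ)
        + ∑ n ∈ range N, (∑ k ∈ range (n + 1), a k) * ((c n : ℂ) - (c (n + 1) : ℂ)) := by
  induction N with
  | zero => simp
  | succ N ih =>
      rw [sum_range_succ (fun n => a n * (c n : ℂ)), ih, sum_range_succ (f := fun n =>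
        (∑ k ∈ range (n + 1), a k) * ((c n : ℂ) - (c (n + 1) : ℂ))),
        sum_range_succ (f := a)]
      ring

/-- A general Abel-type regular summation theorem: if the partial sums of `a` tend to `L`, and
`c i` is a family of antitone nonnegative weight sequences with `c i 0 = 1`, `c i n → 0` as
`n → ∞`, and `c i n → 1` (for each fixed `n`) along the filter `l`, then the weighted sums
`∑' n, a n * c i n` tend to `L` along `l`. -/
private lemma abel_general {ι : Type*} {l : Filter ι} (a : ℕ → ℂ) (L : ℂ)
    (ha : Tendsto (fun N => ∑ n ∈ range N, a n) atTop (𝓝 L))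
    (c : ι → ℕ → ℝ)
    (hc0 : ∀ i, c i 0 = 1)
    (hanti : ∀ i, Antitone (c i))
    (hnn : ∀ i n, 0 ≤ c i n)
    (hlim0 : ∀ i, Tendsto (c i) atTop (𝓝 0))
    (hsum : ∀ i, Summable fun n => a n * (c i n : ℂ))
    (hc1 : ∀ n, Tendsto (fun i => c i n) l (𝓝 1)) :
    Tendsto (fun i => ∑' n, a n * (c i n : ℂ)) l (𝓝 L) := by
  set S : ℕ → ℂ := fun N => ∑ n ∈ range N, a n with hSdef
  obtain ⟨C, hCpos, hC⟩ : ∃ C : ℝ, 0 < C ∧ ∀ N, ‖S (N + 1) - L‖ ≤ C := by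
    have h1 : Tendsto (fun N => ‖S (N + 1) - L‖) atTop (𝓝 0) := by
      have := (tendsto_sub_nhds_zero_iff.mpr ha).norm
      simpa [Function.comp_def] using this.comp (tendsto_add_atTop_nat 1)
    obtain ⟨C, hC⟩ := h1.bddAbove_range
    refine ⟨C + 1, ?_, fun N => ?_⟩
    · have h0 : (0 : ℝ) ≤ C := le_trans (norm_nonneg _) (hC ⟨0, rfl⟩)
      linarith
    · exact le_trans (hC ⟨N, rfl⟩) (by linarith)
  -- weight differences
  set d : ι → ℕ → ℝ := fun i n => c i n - c i (n + 1) with hddef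
  have hdnn : ∀ i n, 0 ≤ d i n := fun i n => sub_nonneg.mpr (hanti i (Nat.le_succ n))
  have htel : ∀ i N, ∑ n ∈ range N, d i n = 1 - c i N := by
    intro i N
    rw [hddef]
    simpa [hc0 i] using sum_range_sub' (c i) N
  have hcle1 : ∀ i n, c i n ≤ 1 := by
    intro i n
    simpa [hc0 i] using hanti i (Nat.zero_le n)
  have hdsummable : ∀ i, Summable (d i) := by
    intro i
    refine summable_of_sum_range_le (c := 1) (hdnn i) fun N => ?_
    rw [htel]
    linarith [hnn i N]
  have hdhas : ∀ i, HasSum (d i) 1 := by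
    intro i
    rw [(hdsummable i).hasSum_iff_tendsto_nat]
    have : Tendsto (fun N => 1 - c i N) atTop (𝓝 (1 - 0)) :=
      tendsto_const_nhds.sub (hlim0 i)
    simpa [htel i] using this
  -- summability of the S-weighted series
  have hsum2 : ∀ i, Summable fun n => (S (n + 1) - L) * (d i n : ℂ) := by
    intro i
    refine Summable.of_norm_bounded (g := fun n => C * d i n)
      (by exact (hdsummable i).mul_left C) fun n => ?_
    rw [norm_mul, Complex.norm_real, Real.norm_of_nonneg (hdnn i n)]
    exact mul_le_mul_of_nonneg_right (hC n) (hdnn i n)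
  have hsumS : ∀ i, Summable fun n => S (n + 1) * (d i n : ℂ) := by
    intro i
    have : (fun n => S (n + 1) * (d i n : ℂ))
        = fun n => (S (n + 1) - L) * (d i n : ℂ) + L * (d i n : ℂ) := by
      funext n; ring
    rw [this]
    exact (hsum2 i).add (((Complex.hasSum_ofReal.mpr (hdhas i)).summable).mul_left L)
  have hdC : ∀ i, HasSum (fun n => ((d i n : ℝ) : ℂ)) 1 := by
    intro i
    simpa using Complex.hasSum_ofReal.mpr (hdhas i)
  -- key identity
  have hkey : ∀ i, ∑' n, a n * (c i n : ℂ) = ∑' n, S (n + 1) * (d i n : ℂ) := by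
    intro i
    have h1 : Tendsto (fun N => ∑ n ∈ range N, a n * (c i n : ℂ)) atTop
        (𝓝 (∑' n, a n * (c i n : ℂ))) := (hsum i).hasSum.tendsto_sum_nat
    have hcC : Tendsto (fun N => ((c i N : ℝ) : ℂ)) atTop (𝓝 0) := by
      have := (Complex.continuous_ofReal.tendsto 0).comp (hlim0 i)
      simpa [Function.comp_def] using this
    have h2 : Tendsto (fun N => S N * ((c i N : ℝ) : ℂ)
        + ∑ n ∈ range N, S (n + 1) * (d i n : ℂ)) atTop
        (𝓝 (L * 0 + ∑' n, S (n + 1) * (d i n : ℂ))) :=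
      (ha.mul hcC).add (hsumS i).hasSum.tendsto_sum_nat
    have heq : (fun N => ∑ n ∈ range N, a n * (c i n : ℂ))
        = fun N => S N * ((c i N : ℝ) : ℂ) + ∑ n ∈ range N, S (n + 1) * (d i n : ℂ) := by
      funext N
      simpa [hSdef, hddef, Complex.ofReal_sub] using sum_abel_id a (c i) N
    rw [heq] at h1
    have := tendsto_nhds_unique h1 h2
    simpa using this
  -- rewrite as L + remainder
  have hrw : ∀ i, ∑' n, a n * (c i n : ℂ) = L + ∑' n, (S (n + 1) - L) * (d i n : ℂ) := by
    intro i
    rw [hkey i]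
    have : (fun n => (S (n + 1) - L) * (d i n : ℂ))
        = fun n => S (n + 1) * (d i n : ℂ) - L * (d i n : ℂ) := by
      funext n; ring
    rw [this, Summable.tsum_sub (hsumS i) (((hdC i).summable).mul_left L), tsum_mul_left,
      (hdC i).tsum_eq]
    ring
  -- the remainder tends to 0
  have hrem : Tendsto (fun i => ∑' n, (S (n + 1) - L) * (d i n : ℂ)) l (𝓝 0) := by
    rw [NormedAddCommGroup.tendsto_nhds_zero]
    intro ε hε
    -- choose M with tail of S close to L
    have h4 : (0 : ℝ) < ε / 4 := by linarith
    obtain ⟨M, hM⟩ : ∃ M, ∀ n, M ≤ n → ‖S (n + 1) - L‖ ≤ ε / 4 := by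
      have := (tendsto_sub_nhds_zero_iff.mpr ha).norm
      rw [Metric.tendsto_atTop] at this
      obtain ⟨M, hM⟩ := this (ε / 4) h4
      exact ⟨M, fun n hn => by
        have := hM (n + 1) (le_trans hn (Nat.le_succ n))
        simp only [Real.dist_eq, sub_zero] at this
        exact le_of_lt (by simpa [abs_of_nonneg (norm_nonneg _)] using this)⟩
    have hcM : ∀ᶠ i in l, 1 - c i M < ε / (4 * C) := by
      have := hc1 M
      rw [Metric.tendsto_nhds] at this
      filter_upwards [this (ε / (4 * C)) (by positivity)] with i hi
      rw [Real.dist_eq] at hi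
      calc 1 - c i M ≤ |c i M - 1| := by rw [abs_sub_comm]; exact le_abs_self _
        _ < ε / (4 * C) := hi
    filter_upwards [hcM] with i hi
    -- split the sum
    have hnormsum : Summable fun n => ‖S (n + 1) - L‖ * d i n := by
      refine Summable.of_nonneg_of_le (fun n => mul_nonneg (norm_nonneg _) (hdnn i n))
        (fun n => mul_le_mul_of_nonneg_right (hC n) (hdnn i n))
        ((hdsummable i).mul_left C)
    have hb1 : ‖∑' n, (S (n + 1) - L) * (d i n : ℂ)‖ ≤ ∑' n, ‖S (n + 1) - L‖ * d i n := by
      have := norm_tsum_le_tsum_norm (f := fun n => (S (n + 1) - L) * (d i n : ℂ)) (by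
        have : (fun n => ‖(S (n + 1) - L) * (d i n : ℂ)‖) = fun n => ‖S (n + 1) - L‖ * d i n := by
          funext n
          rw [norm_mul, Complex.norm_real, Real.norm_of_nonneg (hdnn i n)]
        rw [this]; exact hnormsum)
      refine le_trans this (le_of_eq (tsum_congr fun n => ?_))
      rw [norm_mul, Complex.norm_real, Real.norm_of_nonneg (hdnn i n)]
    rw [← Summable.sum_add_tsum_nat_add M hnormsum] at hb1
    -- head bound
    have hhead : ∑ n ∈ range M, ‖S (n + 1) - L‖ * d i n ≤ C * (1 - c i M) := by
      calc ∑ n ∈ range M, ‖S (n + 1) - L‖ * d i n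
          ≤ ∑ n ∈ range M, C * d i n :=
            Finset.sum_le_sum fun n _ => mul_le_mul_of_nonneg_right (hC n) (hdnn i n)
        _ = C * (1 - c i M) := by rw [← Finset.mul_sum, htel]
    -- tail bound
    have htailsum : Summable fun n => d i (n + M) := (hdsummable i).comp_injective
      (add_left_injective M)
    have htail_le_one : ∑' n, d i (n + M) ≤ 1 := by
      have := Summable.sum_add_tsum_nat_add M (hdsummable i)
      rw [(hdhas i).tsum_eq, htel] at this
      linarith [hnn i M, hcle1 i M]
    have htail : ∑' n, ‖S (n + M + 1) - L‖ * d i (n + M) ≤ ε / 4 := by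
      calc ∑' n, ‖S (n + M + 1) - L‖ * d i (n + M)
          ≤ ∑' n, (ε / 4) * d i (n + M) := by
            refine Summable.tsum_le_tsum (fun n => ?_) ?_ (htailsum.mul_left _)
            · exact mul_le_mul_of_nonneg_right (hM (n + M) (Nat.le_add_left M n))
                (hdnn i _)
            · refine Summable.of_nonneg_of_le
                (fun n => mul_nonneg (norm_nonneg _) (hdnn i _))
                (fun n => mul_le_mul_of_nonneg_right (hC _) (hdnn i _))
                (htailsum.mul_left C)
        _ = (ε / 4) * ∑' n, d i (n + M) := tsum_mul_left
        _ ≤ (ε / 4) * 1 := mul_le_mul_of_nonneg_left htail_le_one (le_of_lt h4)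
        _ = ε / 4 := mul_one _
    have hhead2 : C * (1 - c i M) ≤ ε / 4 := by
      have : C * (1 - c i M) ≤ C * (ε / (4 * C)) :=
        mul_le_mul_of_nonneg_left (le_of_lt hi) (le_of_lt hCpos)
      calc C * (1 - c i M) ≤ C * (ε / (4 * C)) := this
        _ = ε / 4 := by field_simp
    calc ‖∑' n, (S (n + 1) - L) * (d i n : ℂ)‖
        ≤ ∑ n ∈ range M, ‖S (n + 1) - L‖ * d i n
          + ∑' n, ‖S (n + M + 1) - L‖ * d i (n + M) := hb1
      _ ≤ ε / 4 + ε / 4 := add_le_add (le_trans hhead hhead2) htail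
      _ < ε := by linarith
  have : Tendsto (fun i => L + ∑' n, (S (n + 1) - L) * (d i n : ℂ)) l (𝓝 (L + 0)) :=
    tendsto_const_nhds.add hrem
  rw [add_zero] at this
  exact this.congr fun i => (hrw i).symm

/-- Sums of a nontrivial Dirichlet character over any complete period vanish. -/
private lemma char_period_sum (m : ℕ) [NeZero m] (χ : DirichletCharacter ℂ m) (hχ : χ ≠ 1)
    (k : ℕ) : ∑ i ∈ range m, χ ((k + i : ℕ) : ZMod m) = 0 := by
  have hbij : ∑ i ∈ range m, χ ((k + i : ℕ) : ZMod m) = ∑ j : ZMod m, χ j := by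
    refine Finset.sum_nbij' (fun i => ((k + i : ℕ) : ZMod m))
      (fun j => ((j - (k : ℕ)) : ZMod m).val) (fun i _ => Finset.mem_univ _)
      (fun j _ => Finset.mem_range.mpr (ZMod.val_lt _)) ?_ ?_ ?_
    · intro i hi
      push_cast
      have : ((k : ZMod m) + (i : ℕ) - (k : ℕ)) = (i : ZMod m) := by push_cast; ring
      rw [this, ZMod.val_cast_of_lt (Finset.mem_range.mp hi)]
    · intro j _
      push_cast
      rw [ZMod.natCast_zmod_val]
      ring
    · intro i _; rfl
  rw [hbij]
  exact MulChar.sum_eq_zero_of_ne_one hχ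

/-- Partial sums of a nontrivial Dirichlet character are bounded (by `m`). -/
private lemma char_partial_sum_bound (m : ℕ) [NeZero m] (χ : DirichletCharacter ℂ m)
    (hχ : χ ≠ 1) (N : ℕ) : ‖∑ i ∈ range N, χ ((i : ℕ) : ZMod m)‖ ≤ m := by
  induction N using Nat.strong_induction_on with
  | _ N ih =>
    by_cases hN : N < m
    · calc ‖∑ i ∈ range N, χ ((i : ℕ) : ZMod m)‖
          ≤ ∑ i ∈ range N, ‖χ ((i : ℕ) : ZMod m)‖ := norm_sum_le _ _
        _ ≤ ∑ _i ∈ range N, (1 : ℝ) := Finset.sum_le_sum fun i _ =>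
            DirichletCharacter.norm_le_one χ _
        _ = N := by simp
        _ ≤ m := by exact_mod_cast le_of_lt hN
    · push_neg at hN
      have hm : 0 < m := Nat.pos_of_ne_zero (NeZero.ne m)
      have hsplit : ∑ i ∈ range N, χ ((i : ℕ) : ZMod m)
          = ∑ i ∈ range (N - m), χ ((i : ℕ) : ZMod m)
            + ∑ i ∈ range m, χ (((N - m) + i : ℕ) : ZMod m) := by
        have hNm : N - m + m = N := by omega
        rw [← Finset.sum_range_add, hNm]
      rw [hsplit, char_period_sum m χ hχ, add_zero]
      exact ih (N - m) (by omega)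

/-- Let `χ` be a nontrivial Dirichlet character mod `m`.  Then
`∑ χ(n)/n` converges, and `∑_{n≥1} χ(n) n⁻¹ e^{−n²/x} → ∑ χ(n)/n = L(1, χ)` as the real
number `x → ∞`. -/
theorem abel_limit_L_one (m : ℕ) [NeZero m] (χ : DirichletCharacter ℂ m) (hχ : χ ≠ 1) :
    ∃ L : ℂ,
      Tendsto (fun N : ℕ => ∑ n ∈ Finset.Icc 1 N, χ (n : ZMod m) / (n : ℂ))
        atTop (nhds L) ∧
      L = DirichletCharacter.LFunction χ 1 ∧
      Tendsto (fun x : ℝ =>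
          ∑' n : ℕ, χ (n : ZMod m) / (n : ℂ) * Real.exp (-(n : ℝ) ^ 2 / x))
        atTop (nhds L) := by
  -- `m ≠ 1`, so `χ 0 = 0`
  have hm1 : m ≠ 1 := by
    rintro rfl
    exact hχ (DirichletCharacter.level_one χ)
  have hm2 : 1 < m := by
    have := Nat.pos_of_ne_zero (NeZero.ne m); omega
  haveI : Fact (1 < m) := ⟨hm2⟩
  have hχ0 : χ (0 : ZMod m) = 0 := by
    refine MulChar.map_nonunit χ ?_
    intro h
    exact zero_ne_one (isUnit_zero_iff.mp h)
  set a : ℕ → ℂ := fun n => χ ((n : ℕ) : ZMod m) / (n : ℂ) with hadef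
  have ha0 : a 0 = 0 := by simp [hadef]
  -- Step 1: partial sums converge, via Dirichlet's test
  set f : ℕ → ℝ := fun n => ((max n 1 : ℕ) : ℝ)⁻¹ with hfdef
  have hfa : ∀ n, f n • χ ((n : ℕ) : ZMod m) = a n := by
    intro n
    match n with
    | 0 => simp [hadef, hfdef, hχ0]
    | (k + 1) =>
      have : max (k + 1) 1 = k + 1 := by omega
      simp only [hfdef, this, hadef]
      rw [Complex.real_smul]
      push_cast
      rw [div_eq_inv_mul]
  have hfanti : Antitone f := by
    intro p q hpq
    simp only [hfdef]
    have h1 : (1 : ℝ) ≤ ((max p 1 : ℕ) : ℝ) := by exact_mod_cast Nat.le_max_right p 1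
    have h2 : ((max p 1 : ℕ) : ℝ) ≤ ((max q 1 : ℕ) : ℝ) := by
      exact_mod_cast max_le_max hpq (le_refl 1)
    exact inv_anti₀ (by linarith) h2
  have hf0 : Tendsto f atTop (𝓝 0) := by
    have h1 : Tendsto (fun n : ℕ => ((max n 1 : ℕ) : ℝ)) atTop atTop := by
      apply tendsto_natCast_atTop_atTop.comp
      exact tendsto_atTop_mono (fun n => Nat.le_max_left n 1) tendsto_id
    exact h1.inv_tendsto_atTop
  have hcauchy : CauchySeq fun N => ∑ n ∈ range N, a n := by
    have h1 := hfanti.cauchySeq_series_mul_of_tendsto_zero_of_bounded hf0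
      (char_partial_sum_bound m χ hχ)
    have h2 : (fun N => ∑ n ∈ range N, f n • χ ((n : ℕ) : ZMod m))
        = fun N => ∑ n ∈ range N, a n := by
      funext N; exact Finset.sum_congr rfl fun n _ => hfa n
    rwa [h2] at h1
  obtain ⟨L, hL⟩ := cauchySeq_tendsto_of_complete hcauchy
  have haL : Tendsto (fun N => ∑ n ∈ range N, a n) atTop (𝓝 L) := hL
  -- the Icc version
  have hIcc : ∀ N, ∑ n ∈ Finset.Icc 1 N, a n = ∑ n ∈ range (N + 1), a n := by
    intro N
    induction N with
    | zero => simp [ha0]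
    | succ N ih =>
        rw [Finset.sum_Icc_succ_top (by omega), ih]
        exact (Finset.sum_range_succ a (N + 1)).symm
  have hpart1 : Tendsto (fun N : ℕ => ∑ n ∈ Finset.Icc 1 N, a n) atTop (𝓝 L) := by
    have := haL.comp (tendsto_add_atTop_nat 1)
    exact this.congr fun N => (hIcc N).symm
  -- norm bound ‖a n‖ for n ≥ 1
  have hanormle : ∀ n : ℕ, 1 ≤ n → ‖a n‖ ≤ ((n : ℝ))⁻¹ := by
    intro n hn
    simp only [hadef, norm_div, Complex.norm_natCast]
    have h1 : (0 : ℝ) < n := by exact_mod_cast hn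
    rw [div_eq_mul_inv]
    have := DirichletCharacter.norm_le_one χ ((n : ℕ) : ZMod m)
    nlinarith [inv_nonneg.mpr (le_of_lt h1)]
  refine ⟨L, hpart1, ?_, ?_⟩
  -- Step 2: L = LFunction χ 1
  · set t : ℕ → ℝ := fun k => (1 : ℝ) / (k + 1) with htdef
    have htpos : ∀ k, 0 < t k := fun k => by positivity
    have ht0 : Tendsto t atTop (𝓝 0) := tendsto_one_div_add_atTop_nhds_zero_nat
    set c : ℕ → ℕ → ℝ := fun k n => ((max n 1 : ℕ) : ℝ) ^ (-(t k)) with hcdef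
    have hbase1 : ∀ n : ℕ, (1 : ℝ) ≤ ((max n 1 : ℕ) : ℝ) := fun n => by
      exact_mod_cast Nat.le_max_right n 1
    have hbasepos : ∀ n : ℕ, (0 : ℝ) < ((max n 1 : ℕ) : ℝ) := fun n =>
      lt_of_lt_of_le one_pos (hbase1 n)
    have hLf : Tendsto (fun k : ℕ => ∑' n, a n * (c k n : ℂ)) atTop (𝓝 L) := by
      refine abel_general a L haL c ?_ ?_ ?_ ?_ ?_ ?_
      · intro k; simp [hcdef]
      · intro k p q hpq
        simp only [hcdef]
        exact Real.rpow_le_rpow_of_nonpos (hbasepos p)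
          (by exact_mod_cast max_le_max hpq (le_refl 1)) (by linarith [htpos k])
      · intro k n; exact Real.rpow_nonneg (le_of_lt (hbasepos n)) _
      · intro k
        have h1 : Tendsto (fun n : ℕ => ((max n 1 : ℕ) : ℝ)) atTop atTop := by
          apply tendsto_natCast_atTop_atTop.comp
          exact tendsto_atTop_mono (fun n => Nat.le_max_left n 1) tendsto_id
        exact (tendsto_rpow_neg_atTop (htpos k)).comp h1
      · intro k
        set g : ℕ → ℝ := fun n => ((max n 1 : ℕ) : ℝ) ^ (-(1 + t k)) with hgdef
        have hgs : Summable g := by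
          rw [← summable_nat_add_iff 1]
          have h1 : Summable (fun n : ℕ => ((n : ℝ)) ^ (-(1 + t k))) :=
            Real.summable_nat_rpow.mpr (by linarith [htpos k])
          refine ((summable_nat_add_iff 1).mpr h1).congr fun n => ?_
          have : max (n + 1) 1 = n + 1 := by omega
          simp [hgdef, this]
        refine Summable.of_norm_bounded (g := g) hgs fun n => ?_
        match n with
        | 0 => simp [ha0, hgdef, Real.rpow_nonneg]
        | (p + 1) =>
          have hmax : max (p + 1) 1 = p + 1 := by omega
          have hx : (0 : ℝ) < ((p + 1 : ℕ) : ℝ) := by positivity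
          rw [norm_mul, Complex.norm_real, Real.norm_of_nonneg
            (Real.rpow_nonneg (le_of_lt (hbasepos (p + 1))) _)]
          simp only [hgdef, hcdef, hmax]
          calc ‖a (p + 1)‖ * ((p + 1 : ℕ) : ℝ) ^ (-(t k))
              ≤ (((p + 1 : ℕ) : ℝ))⁻¹ * ((p + 1 : ℕ) : ℝ) ^ (-(t k)) := by
                exact mul_le_mul_of_nonneg_right (hanormle (p + 1) (by omega))
                  (Real.rpow_nonneg (le_of_lt hx) _)
            _ = ((p + 1 : ℕ) : ℝ) ^ (-(1 : ℝ)) * ((p + 1 : ℕ) : ℝ) ^ (-(t k)) := by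
                rw [Real.rpow_neg_one]
            _ = ((p + 1 : ℕ) : ℝ) ^ (-(1 + t k)) := by
                rw [← Real.rpow_add hx]; ring_nf
      · intro n
        simp only [hcdef]
        have h1 : Tendsto (fun k => -(t k)) atTop (𝓝 0) := by simpa using ht0.neg
        have hcont : ContinuousAt (fun e : ℝ => ((max n 1 : ℕ) : ℝ) ^ e) 0 :=
          Real.continuousAt_const_rpow (ne_of_gt (hbasepos n))
        have := hcont.tendsto.comp h1
        simpa [Function.comp_def] using this
    -- identify the weighted sums with LFunction values
    have hLS : ∀ k, ∑' n, a n * (c k n : ℂ)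
        = DirichletCharacter.LFunction χ (((1 + t k : ℝ) : ℂ)) := by
      intro k
      have hre : 1 < (((1 + t k : ℝ) : ℂ)).re := by
        simp only [Complex.ofReal_re]
        linarith [htpos k]
      rw [DirichletCharacter.LFunction_eq_LSeries χ hre]
      unfold LSeries
      refine tsum_congr fun n => ?_
      match n with
      | 0 => simp [ha0, LSeries.term_def]
      | (p + 1) =>
        have hmax : max (p + 1) 1 = p + 1 := by omega
        have hx : (0 : ℝ) < ((p + 1 : ℕ) : ℝ) := by positivity
        rw [LSeries.term_def]
        simp only [Nat.succ_ne_zero, if_false, hadef, hcdef, hmax]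
        have hcpow : ((p + 1 : ℕ) : ℂ) ^ (((1 + t k : ℝ) : ℂ))
            = ((((p + 1 : ℕ) : ℝ) ^ (1 + t k) : ℝ) : ℂ) := by
          rw [Complex.ofReal_cpow (le_of_lt hx)]
          norm_cast
        rw [hcpow]
        have hsplit : ((p + 1 : ℕ) : ℝ) ^ (1 + t k)
            = ((p + 1 : ℕ) : ℝ) * ((p + 1 : ℕ) : ℝ) ^ (t k) := by
          rw [Real.rpow_add hx, Real.rpow_one]
        have hneg : ((p + 1 : ℕ) : ℝ) ^ (-(t k)) = (((p + 1 : ℕ) : ℝ) ^ (t k))⁻¹ :=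
          Real.rpow_neg (le_of_lt hx) _
        rw [hsplit, hneg]
        have hpow_pos : (0 : ℝ) < ((p + 1 : ℕ) : ℝ) ^ (t k) := Real.rpow_pos_of_pos hx _
        have h1 : (((p + 1 : ℕ) : ℝ) : ℂ) ≠ 0 := by exact_mod_cast ne_of_gt hx
        have h2 : ((((p + 1 : ℕ) : ℝ) ^ (t k) : ℝ) : ℂ) ≠ 0 := by
          exact_mod_cast ne_of_gt hpow_pos
        push_cast
        field_simp
    -- continuity of LFunction at 1
    have hs1 : Tendsto (fun k => (((1 + t k : ℝ) : ℂ))) atTop (𝓝 1) := by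
      have h1 : Tendsto (fun k => (1 + t k : ℝ)) atTop (𝓝 1) := by
        have := (tendsto_const_nhds (x := (1 : ℝ)) (f := atTop (α := ℕ))).add ht0
        simpa using this
      have h2 := (Complex.continuous_ofReal.tendsto 1).comp h1
      refine Tendsto.congr (fun k => ?_) (by simpa using h2)
      simp only [Function.comp, htdef]
      try push_cast
      try ring
    have hLcont : Tendsto (fun k => DirichletCharacter.LFunction χ (((1 + t k : ℝ) : ℂ)))
        atTop (𝓝 (DirichletCharacter.LFunction χ 1)) :=
      ((DirichletCharacter.differentiableAt_LFunction χ 1 (Or.inr hχ)).continuousAt.tendsto).comp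
        hs1
    have hLf2 : Tendsto (fun k : ℕ => ∑' n, a n * (c k n : ℂ)) atTop
        (𝓝 (DirichletCharacter.LFunction χ 1)) := by
      refine hLcont.congr fun k => (hLS k).symm
    exact tendsto_nhds_unique hLf hLf2
  -- Step 3: Gaussian weights
  · set c : ℝ → ℕ → ℝ := fun x n => Real.exp (-(n : ℝ) ^ 2 / max x 1) with hcdef
    have hypos : ∀ x : ℝ, (0 : ℝ) < max x 1 := fun x => lt_of_lt_of_le one_pos (le_max_right x 1)
    have hmain : Tendsto (fun x : ℝ => ∑' n, a n * (c x n : ℂ)) atTop (𝓝 L) := by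
      refine abel_general a L haL c ?_ ?_ ?_ ?_ ?_ ?_
      · intro x; simp [hcdef]
      · intro x p q hpq
        simp only [hcdef]
        rw [Real.exp_le_exp, neg_div, neg_div, neg_le_neg_iff]
        have hpq2 : ((p : ℝ)) ^ 2 ≤ ((q : ℝ)) ^ 2 := by
          have h' : (p : ℝ) ≤ q := by exact_mod_cast hpq
          nlinarith [Nat.cast_nonneg (α := ℝ) p]
        exact div_le_div_of_nonneg_right' hpq2 (hypos x)
      · intro x n; exact le_of_lt (Real.exp_pos _)
      · intro x
        simp only [hcdef]
        refine Real.tendsto_exp_atBot.comp ?_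
        have h1 : Tendsto (fun n : ℕ => ((n : ℝ)) ^ 2) atTop atTop := by
          have := (tendsto_pow_atTop (n := 2) (two_ne_zero)).comp
            (tendsto_natCast_atTop_atTop (R := ℝ))
          exact this
        have h2 : Tendsto (fun n : ℕ => ((n : ℝ)) ^ 2 / max x 1) atTop atTop :=
          h1.atTop_div_const (hypos x)
        have h3 := tendsto_neg_atTop_atBot.comp h2
        refine h3.congr fun n => ?_
        simp [Function.comp, neg_div]
      · intro x
        set r : ℝ := Real.exp (-(1 / max x 1)) with hrdef
        have hr0 : 0 ≤ r := le_of_lt (Real.exp_pos _)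
        have hr1 : r < 1 := by
          rw [hrdef, Real.exp_lt_one_iff]
          have h' : 0 < 1 / max x 1 := div_pos one_pos (hypos x)
          linarith
        refine Summable.of_norm_bounded (g := fun n => r ^ n)
          (summable_geometric_of_lt_one hr0 hr1) fun n => ?_
        match n with
        | 0 => simp [ha0]
        | (p + 1) =>
          have hp1 : (1 : ℝ) ≤ ((p + 1 : ℕ) : ℝ) := by exact_mod_cast Nat.one_le_iff_ne_zero.mpr (Nat.succ_ne_zero p)
          rw [norm_mul, Complex.norm_real, Real.norm_of_nonneg (le_of_lt (Real.exp_pos _))]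
          have hnorm1 : ‖a (p + 1)‖ ≤ 1 := by
            refine le_trans (hanormle (p + 1) (by omega)) ?_
            rw [← one_div, div_le_one (by positivity)]
            exact hp1
          have hexp : c x (p + 1) ≤ r ^ (p + 1) := by
            rw [hrdef, ← Real.exp_nat_mul, hcdef]
            rw [Real.exp_le_exp]
            have h2 : ((p + 1 : ℕ) : ℝ) ≤ ((p + 1 : ℕ) : ℝ) ^ 2 := by nlinarith
            have key : ((p + 1 : ℕ) : ℝ) / max x 1 ≤ ((p + 1 : ℕ) : ℝ) ^ 2 / max x 1 :=
              div_le_div_of_nonneg_right' h2 (hypos x)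
            calc -((p + 1 : ℕ) : ℝ) ^ 2 / max x 1
                = -(((p + 1 : ℕ) : ℝ) ^ 2 / max x 1) := by rw [neg_div]
              _ ≤ -(((p + 1 : ℕ) : ℝ) / max x 1) := neg_le_neg key
              _ = ((p + 1 : ℕ) : ℝ) * -(1 / max x 1) := by ring
          calc ‖a (p + 1)‖ * c x (p + 1) ≤ 1 * (r ^ (p + 1)) := by
                refine mul_le_mul hnorm1 hexp (le_of_lt (Real.exp_pos _)) zero_le_one
            _ = r ^ (p + 1) := one_mul _
      · intro n
        simp only [hcdef]
        have h1 : Tendsto (fun x : ℝ => max x 1) atTop atTop :=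
          tendsto_atTop_mono (fun x => le_max_left x 1) tendsto_id
        have h2 : Tendsto (fun x : ℝ => (max x 1)⁻¹) atTop (𝓝 0) := h1.inv_tendsto_atTop
        have h3 : Tendsto (fun x : ℝ => -(n : ℝ) ^ 2 / max x 1) atTop (𝓝 0) := by
          have := h2.const_mul (-(n : ℝ) ^ 2)
          simpa [div_eq_mul_inv, mul_comm] using this
        have := (Real.continuous_exp.tendsto 0).comp h3
        simpa [Function.comp_def] using this
    have heq : (fun x : ℝ => ∑' n, a n * (c x n : ℂ)) =ᶠ[atTop]
        fun x : ℝ => ∑' n : ℕ, χ ((n : ℕ) : ZMod m) / (n : ℂ) * Real.exp (-(n : ℝ) ^ 2 / x) := by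
      filter_upwards [eventually_ge_atTop (1 : ℝ)] with x hx
      have hmax : max x 1 = x := max_eq_left hx
      refine tsum_congr fun n => ?_
      simp [hadef, hcdef, hmax]
    exact hmain.congr' heq
end
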